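/- arXiv:2107.10753 — 8 statements merged into one kernel-verified Lean document; each statement's English description precedes it below -/
import Mathlib

section
/- Let L : ℝⁿ × ℝⁿ → ℝ be a symmetric bilinear form of operator norm one, and let x, y ∈ ℝⁿ be linearly independent unit vectors such that L(x,y) = 1. Then the vectors f₁ = (x+y)/‖x+y‖ and f₂ = (x−y)/‖x−y‖ are orthonormal, L(f₁,f₁) = 1, and L(f₂,f₂) = −1. -/
/-- If `L` is a symmetric bilinear form on `ℝⁿ` of operator norm one and
`x, y` are linearly independent unit vectors with `L x y = 1`, then
`f₁ = (x+y)/‖x+y‖` and `f₂ = (x−y)/‖x−y‖` are orthonormal, `L f₁ f₁ = 1` and `L f₂ f₂ = −1`. -/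
theorem symmetric_bilinear_norm_one_diagonalization
    {n : ℕ} (L : EuclideanSpace ℝ (Fin n) →ₗ[ℝ] EuclideanSpace ℝ (Fin n) →ₗ[ℝ] ℝ)
    (hsym : ∀ u v, L u v = L v u)
    (hbound : ∀ u v, |L u v| ≤ ‖u‖ * ‖v‖)
    (x y : EuclideanSpace ℝ (Fin n))
    (hx : ‖x‖ = 1) (hy : ‖y‖ = 1)
    (hind : LinearIndependent ℝ ![x, y])
    (hLxy : L x y = 1) :
    ‖(‖x + y‖⁻¹ • (x + y) : EuclideanSpace ℝ (Fin n))‖ = 1 ∧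
    ‖(‖x - y‖⁻¹ • (x - y) : EuclideanSpace ℝ (Fin n))‖ = 1 ∧
    (inner ℝ (‖x + y‖⁻¹ • (x + y) : EuclideanSpace ℝ (Fin n))
      (‖x - y‖⁻¹ • (x - y) : EuclideanSpace ℝ (Fin n)) : ℝ) = 0 ∧
    L (‖x + y‖⁻¹ • (x + y)) (‖x + y‖⁻¹ • (x + y)) = 1 ∧
    L (‖x - y‖⁻¹ • (x - y)) (‖x - y‖⁻¹ • (x - y)) = -1 := by
  obtain ⟨hy0, hax⟩ := linearIndependent_fin2.mp hind
  simp only [Matrix.cons_val_zero, Matrix.cons_val_one, Matrix.head_cons] at hax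
  have hadd : x + y ≠ 0 := by
    intro h
    exact hax (-1) (by rw [neg_one_smul]; exact (eq_neg_of_add_eq_zero_left h).symm)
  have hsub : x - y ≠ 0 := by
    intro h
    exact hax 1 (by rw [one_smul]; exact (sub_eq_zero.mp h).symm)
  have hna : (0:ℝ) < ‖x + y‖ := norm_pos_iff.mpr hadd
  have hns : (0:ℝ) < ‖x - y‖ := norm_pos_iff.mpr hsub
  set c : ℝ := inner ℝ x y with hc
  have hnorma : ‖x + y‖ * ‖x + y‖ = 2 + 2 * c := by
    have := norm_add_sq_real x y
    rw [hx, hy] at this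
    nlinarith [this]
  have hnorms : ‖x - y‖ * ‖x - y‖ = 2 - 2 * c := by
    have := norm_sub_sq_real x y
    rw [hx, hy] at this
    nlinarith [this]
  set a : ℝ := L x x with ha
  set b : ℝ := L y y with hb
  have hLyx : L y x = 1 := by rw [hsym]; exact hLxy
  have hLadd : L (x + y) (x + y) = a + b + 2 := by
    simp [map_add, hLxy, hLyx]; ring
  have hLsub : L (x - y) (x - y) = a + b - 2 := by
    simp [map_sub, hLxy, hLyx]; ring
  have h1 : |a + b + 2| ≤ 2 + 2 * c := by
    have := hbound (x + y) (x + y)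
    rwa [hLadd, hnorma] at this
  have h2 : |a + b - 2| ≤ 2 - 2 * c := by
    have := hbound (x - y) (x - y)
    rwa [hLsub, hnorms] at this
  have hab : a + b = 2 * c := by
    rw [abs_le] at h1 h2
    linarith [h1.2, h2.1]
  have hsmul : ∀ (r : ℝ) (u v : EuclideanSpace ℝ (Fin n)),
      L (r • u) (r • v) = r * r * L u v := by
    intro r u v
    simp [map_smul]; ring
  refine ⟨?_, ?_, ?_, ?_, ?_⟩
  · rw [norm_smul, Real.norm_eq_abs, abs_inv, abs_of_pos hna, inv_mul_cancel₀ hna.ne']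
  · rw [norm_smul, Real.norm_eq_abs, abs_inv, abs_of_pos hns, inv_mul_cancel₀ hns.ne']
  · rw [real_inner_smul_left, real_inner_smul_right]
    have : (inner ℝ (x + y) (x - y) : ℝ) = 0 := by
      rw [inner_add_left, inner_sub_right, inner_sub_right,
        real_inner_self_eq_norm_mul_norm, real_inner_self_eq_norm_mul_norm,
        real_inner_comm y x, hx, hy]
      ring
    rw [this]; ring
  · rw [hsmul, hLadd, hab, show (2 * c + 2 : ℝ) = ‖x + y‖ * ‖x + y‖ by rw [hnorma]; ring]
    field_simp
  · rw [hsmul, hLsub, hab, show (2 * c - 2 : ℝ) = -(‖x - y‖ * ‖x - y‖) by rw [hnorms]; ring]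
    field_simp
end

section
/- Let L : ℝⁿ × ℝⁿ → ℝ be a symmetric bilinear form of operator norm one, and let x, y ∈ ℝⁿ be linearly independent unit vectors with L(x,y) = 1. Let α ∈ ℝ, let x̃ be the vector obtained by rotating x by angle α within the plane span{x,y}, and let ỹ be obtained by rotating y by angle α in the opposite direction within the same plane. Then L(x̃,ỹ) = 1. -/
private lemma aux_norm_one (r : ℝ) (h0 : 0 ≤ r) (h2 : r ^ 2 = 1) : r = 1 := by
  nlinarith

private lemma aux_extreme (P W c s : ℝ) (hP : -1 ≤ P) (hP' : P ≤ 1) (hW : -1 ≤ W)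
    (hW' : W ≤ 1) (hc : 0 < c ^ 2) (hs : 0 < s ^ 2)
    (h : c ^ 2 * P - s ^ 2 * W = 1) (hp : s ^ 2 + c ^ 2 = 1) : P = 1 ∧ W = -1 := by
  constructor <;> nlinarith

set_option maxHeartbeats 1000000 in
/-- Let `L` be a symmetric bilinear form on `ℝⁿ` of operator norm one and
`x, y` linearly independent unit vectors with `L x y = 1`.  If `x̃` is obtained from `x` by a
rotation of angle `α` in the plane `span{x,y}` and `ỹ` is obtained from `y` by a rotation of
angle `α` in the opposite direction (expressed in an orthonormal basis `e₁, e₂` of the plane,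
with `x = cos θ e₁ + sin θ e₂` and `y = cos ψ e₁ + sin ψ e₂`), then `L x̃ ỹ = 1`. -/
theorem symmetric_bilinear_norm_one_rotation
    {n : ℕ} (L : EuclideanSpace ℝ (Fin n) →ₗ[ℝ] EuclideanSpace ℝ (Fin n) →ₗ[ℝ] ℝ)
    (hsym : ∀ u v, L u v = L v u)
    (hbound : ∀ u v, |L u v| ≤ ‖u‖ * ‖v‖)
    (x y : EuclideanSpace ℝ (Fin n))
    (hx : ‖x‖ = 1) (hy : ‖y‖ = 1)
    (hind : LinearIndependent ℝ ![x, y])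
    (hLxy : L x y = 1)
    (e₁ e₂ : EuclideanSpace ℝ (Fin n))
    (he₁ : ‖e₁‖ = 1) (he₂ : ‖e₂‖ = 1) (he : (inner ℝ e₁ e₂ : ℝ) = 0)
    (θ ψ α : ℝ)
    (hxe : x = Real.cos θ • e₁ + Real.sin θ • e₂)
    (hye : y = Real.cos ψ • e₁ + Real.sin ψ • e₂) :
    L (Real.cos (θ + α) • e₁ + Real.sin (θ + α) • e₂)
      (Real.cos (ψ - α) • e₁ + Real.sin (ψ - α) • e₂) = 1 := by
  have hee₁ : (inner ℝ e₁ e₁ : ℝ) = 1 := by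
    rw [real_inner_self_eq_norm_sq, he₁]; norm_num
  have hee₂ : (inner ℝ e₂ e₂ : ℝ) = 1 := by
    rw [real_inner_self_eq_norm_sq, he₂]; norm_num
  have he' : (inner ℝ e₂ e₁ : ℝ) = 0 := by rw [real_inner_comm]; exact he
  set m : ℝ := (θ + ψ) / 2 with hm
  set d : ℝ := (θ - ψ) / 2 with hd
  have hθ : θ = m + d := by rw [hm, hd]; ring
  have hψ : ψ = m - d := by rw [hm, hd]; ring
  set u : EuclideanSpace ℝ (Fin n) := Real.cos m • e₁ + Real.sin m • e₂ with hu
  set w : EuclideanSpace ℝ (Fin n) := (-Real.sin m) • e₁ + Real.cos m • e₂ with hw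
  have pm := Real.sin_sq_add_cos_sq m
  have pd := Real.sin_sq_add_cos_sq d
  have pda := Real.sin_sq_add_cos_sq (d + α)
  -- norms of u and w
  have hnu : ‖u‖ = 1 := by
    have h2 : ‖u‖ ^ 2 = 1 := by
      rw [← real_inner_self_eq_norm_sq, hu]
      simp only [inner_add_add_self, real_inner_smul_left, real_inner_smul_right,
        hee₁, hee₂, he, he', mul_one, mul_zero, add_zero, zero_add]
      nlinarith [pm]
    exact aux_norm_one _ (norm_nonneg u) h2
  have hnw : ‖w‖ = 1 := by
    have h2 : ‖w‖ ^ 2 = 1 := by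
      rw [← real_inner_self_eq_norm_sq, hw]
      simp only [inner_add_add_self, real_inner_smul_left, real_inner_smul_right,
        hee₁, hee₂, he, he', mul_one, mul_zero, add_zero, zero_add]
      nlinarith [pm]
    exact aux_norm_one _ (norm_nonneg w) h2
  -- general expansion of L on the plane
  have hexp : ∀ a b c f : ℝ, L (a • e₁ + b • e₂) (c • e₁ + f • e₂)
      = a * c * L e₁ e₁ + (a * f + b * c) * L e₁ e₂ + b * f * L e₂ e₂ := by
    intro a b c f
    simp only [map_add, map_smul, LinearMap.add_apply, LinearMap.smul_apply, smul_eq_mul,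
      hsym e₂ e₁]
    ring
  -- L x y in terms of L u u and L w w
  have hLuu : L u u = Real.cos m * Real.cos m * L e₁ e₁
      + (Real.cos m * Real.sin m + Real.sin m * Real.cos m) * L e₁ e₂
      + Real.sin m * Real.sin m * L e₂ e₂ := hexp _ _ _ _
  have hLww : L w w = (-Real.sin m) * (-Real.sin m) * L e₁ e₁
      + ((-Real.sin m) * Real.cos m + Real.cos m * (-Real.sin m)) * L e₁ e₂
      + Real.cos m * Real.cos m * L e₂ e₂ := hexp _ _ _ _
  have key : ∀ β : ℝ, L (Real.cos (m + β) • e₁ + Real.sin (m + β) • e₂)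
      (Real.cos (m - β) • e₁ + Real.sin (m - β) • e₂)
      = Real.cos β ^ 2 * L u u - Real.sin β ^ 2 * L w w := by
    intro β
    rw [hexp, hLuu, hLww, Real.cos_add, Real.cos_sub, Real.sin_add, Real.sin_sub]
    have pb := Real.sin_sq_add_cos_sq β
    nlinarith [pb, sq_nonneg (Real.sin β), sq_nonneg (Real.cos β)]
  -- sin d ≠ 0 and cos d ≠ 0 from linear independence
  have hpair := LinearIndependent.pair_iff.mp hind
  have hsd : Real.sin d ≠ 0 := by
    intro h0
    have hxy : x = y := by
      rw [hxe, hye, hθ, hψ, Real.cos_add, Real.cos_sub, Real.sin_add, Real.sin_sub, h0]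
      ring_nf
    have := hpair 1 (-1) (by rw [hxy]; simp)
    simpa using this.1
  have hcd : Real.cos d ≠ 0 := by
    intro h0
    have hxy : x = -y := by
      rw [hxe, hye, hθ, hψ, Real.cos_add, Real.cos_sub, Real.sin_add, Real.sin_sub, h0]
      simp only [neg_add, ← neg_smul]
      ring_nf
    have := hpair 1 1 (by rw [hxy]; simp)
    simpa using this.1
  -- equality forces L u u = 1, L w w = -1
  have hbu : |L u u| ≤ 1 := by simpa [hnu] using hbound u u
  have hbw : |L w w| ≤ 1 := by simpa [hnw] using hbound w w
  have hbu' := abs_le.mp hbu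
  have hbw' := abs_le.mp hbw
  have hxy1 : Real.cos d ^ 2 * L u u - Real.sin d ^ 2 * L w w = 1 := by
    have := key d
    rw [← hθ, ← hψ] at this
    rw [← this, ← hxe, ← hye, hLxy]
  have hsd2 : 0 < Real.sin d ^ 2 := by positivity
  have hcd2 : 0 < Real.cos d ^ 2 := by positivity
  obtain ⟨huu1, hww1⟩ := aux_extreme (L u u) (L w w) (Real.cos d) (Real.sin d)
    hbu'.1 hbu'.2 hbw'.1 hbw'.2 hcd2 hsd2 hxy1 pd
  -- conclude
  have hθα : θ + α = m + (d + α) := by rw [hθ]; ring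
  have hψα : ψ - α = m - (d + α) := by rw [hψ]; ring
  rw [hθα, hψα, key (d + α), huu1, hww1]
  nlinarith [pda]
end

section
/- Let H be a real or complex inner product space of dimension at least 3, let d > 1, and let x₁, ..., x_d be unit vectors in H. If there exists a symmetric continuous d-linear form L of norm one attaining its norm at (x₁,...,x_d) (i.e., |L(x₁,...,x_d)| = 1), then there exist infinitely many symmetric d-linear forms of norm one attaining their norm at (x₁,...,x_d). -/
open scoped BigOperators

section Auxiliary




lemma sq_prod_add_sq_prod_le {ι : Type*} [DecidableEq ι] (s : Finset ι) (hs : s.Nonempty)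
    (a b c : ι → ℝ) (ha : ∀ i ∈ s, 0 ≤ a i) (hb : ∀ i ∈ s, 0 ≤ b i)
    (h : ∀ i ∈ s, a i ^ 2 + b i ^ 2 ≤ c i ^ 2) :
    (∏ i ∈ s, a i) ^ 2 + (∏ i ∈ s, b i) ^ 2 ≤ ∏ i ∈ s, c i ^ 2 := by
  induction hs using Finset.Nonempty.cons_induction with
  | singleton i => simpa using h _ (by simp)
  | cons i t hit ht ih =>
    simp only [Finset.prod_cons]
    have ih' := ih (fun j hj => ha j (by simp [hj])) (fun j hj => hb j (by simp [hj]))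
      (fun j hj => h j (by simp [hj]))
    have hi := h i (by simp)
    have hai := ha i (by simp)
    have hbi := hb i (by simp)
    have hA : 0 ≤ (∏ j ∈ t, a j) ^ 2 := sq_nonneg _
    have hB : 0 ≤ (∏ j ∈ t, b j) ^ 2 := sq_nonneg _
    have key : (a i * ∏ j ∈ t, a j) ^ 2 + (b i * ∏ j ∈ t, b j) ^ 2
        ≤ (a i ^ 2 + b i ^ 2) * ((∏ j ∈ t, a j) ^ 2 + (∏ j ∈ t, b j) ^ 2) := by
      ring_nf; nlinarith [sq_nonneg (a i), sq_nonneg (b i)]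
    refine key.trans ?_
    calc (a i ^ 2 + b i ^ 2) * ((∏ j ∈ t, a j) ^ 2 + (∏ j ∈ t, b j) ^ 2)
        ≤ c i ^ 2 * ∏ j ∈ t, c j ^ 2 := by
          apply mul_le_mul hi ih' (by positivity) (by nlinarith)
      _ = _ := rfl

lemma prod_add_prod_le {d : ℕ} (hd : 1 < d) (a b c : Fin d → ℝ)
    (ha : ∀ i, 0 ≤ a i) (hb : ∀ i, 0 ≤ b i) (hc : ∀ i, 0 ≤ c i)
    (h : ∀ i, a i ^ 2 + b i ^ 2 ≤ c i ^ 2) :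
    (∏ i, a i) + (∏ i, b i) ≤ ∏ i, c i := by
  have hd0 : 0 < d := by omega
  set i0 : Fin d := ⟨0, hd0⟩
  have hmem : i0 ∈ (Finset.univ : Finset (Fin d)) := Finset.mem_univ _
  have ht : (Finset.univ.erase i0).Nonempty := by
    refine ⟨⟨1, hd⟩, ?_⟩
    simp [Finset.mem_erase, i0, Fin.ext_iff]
  have hsplit_a := (Finset.mul_prod_erase Finset.univ a hmem).symm
  have hsplit_b := (Finset.mul_prod_erase Finset.univ b hmem).symm
  have hsplit_c := (Finset.mul_prod_erase Finset.univ c hmem).symm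
  rw [hsplit_a, hsplit_b, hsplit_c]
  have hq := sq_prod_add_sq_prod_le (Finset.univ.erase i0) ht a b c
    (fun j _ => ha j) (fun j _ => hb j) (fun j _ => h j)
  set A := ∏ j ∈ Finset.univ.erase i0, a j with hA
  set B := ∏ j ∈ Finset.univ.erase i0, b j with hB
  set C := ∏ j ∈ Finset.univ.erase i0, c j with hC
  have hCsq : ∏ j ∈ Finset.univ.erase i0, c j ^ 2 = C ^ 2 := by
    rw [hC, Finset.prod_pow]
  rw [hCsq] at hq
  have hAn : 0 ≤ A := Finset.prod_nonneg fun j _ => ha j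
  have hBn : 0 ≤ B := Finset.prod_nonneg fun j _ => hb j
  have hCn : 0 ≤ C := Finset.prod_nonneg fun j _ => hc j
  nlinarith [sq_nonneg (a i0 * B - b i0 * A), sq_nonneg (a i0 * A + b i0 * B),
    mul_le_mul (h i0) hq (by positivity) (by positivity),
    mul_nonneg (ha i0) hAn, mul_nonneg (hb i0) hBn, mul_nonneg hCn (hc i0),
    sq_nonneg (a i0 * A + b i0 * B + c i0 * C)]


variable {𝕜 : Type*} [RCLike 𝕜] {H : Type*} [NormedAddCommGroup H] [InnerProductSpace 𝕜 H]

lemma case_perp {d : ℕ} (hd : 1 < d)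
    (x : Fin d → H) (hx : ∀ i, ‖x i‖ = 1)
    (L : MultilinearMap 𝕜 (fun _ : Fin d => H) 𝕜)
    (hLsym : ∀ (η : Equiv.Perm (Fin d)) (y : Fin d → H), L (y ∘ η) = L y)
    (hLbound : ∀ y : Fin d → H, ‖L y‖ ≤ ∏ i, ‖y i‖)
    (hLattain : ‖L x‖ = 1)
    (e : H) (he : ‖e‖ = 1) (hex : ∀ i, (inner 𝕜 e (x i) : 𝕜) = 0) :
    {T : MultilinearMap 𝕜 (fun _ : Fin d => H) 𝕜 |
      (∀ (η : Equiv.Perm (Fin d)) (y : Fin d → H), T (y ∘ η) = T y) ∧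
      (∀ y : Fin d → H, ‖T y‖ ≤ ∏ i, ‖y i‖) ∧ ‖T x‖ = 1}.Infinite := by
  classical
  have hd0 : 0 < d := by omega
  set i0 : Fin d := ⟨0, hd0⟩
  have hee : (inner 𝕜 e e : 𝕜) = 1 := by
    rw [inner_self_eq_norm_sq_to_K, he]; norm_num
  set Q : H →ₗ[𝕜] H := LinearMap.id - ((innerSL 𝕜 e).toLinearMap.smulRight e) with hQdef
  have hQ : ∀ z, Q z = z - (inner 𝕜 e z : 𝕜) • e := by
    intro z; simp [hQdef]
  have hQx : ∀ i, Q (x i) = x i := by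
    intro i; rw [hQ, hex i, zero_smul, sub_zero]
  have hQe : Q e = 0 := by rw [hQ, hee, one_smul, sub_self]
  have hQperp : ∀ z, (inner 𝕜 (Q z) ((inner 𝕜 e z : 𝕜) • e) : 𝕜) = 0 := by
    intro z
    rw [inner_smul_right, hQ, inner_sub_left, inner_smul_left, hee, mul_one,
      ← inner_conj_symm e z]
    ring_nf
    simp
  have hQnorm : ∀ z, ‖Q z‖ ^ 2 + ‖(inner 𝕜 e z : 𝕜)‖ ^ 2 ≤ ‖z‖ ^ 2 := by
    intro z
    have hz : z = Q z + (inner 𝕜 e z : 𝕜) • e := by rw [hQ]; abel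
    have : ‖z‖ ^ 2 = ‖Q z‖ ^ 2 + ‖(inner 𝕜 e z : 𝕜) • e‖ ^ 2 := by
      conv_lhs => rw [hz]
      rw [@norm_add_sq 𝕜, hQperp z]
      simp
    rw [this, norm_smul, he, mul_one]
  set P : MultilinearMap 𝕜 (fun _ : Fin d => H) 𝕜 :=
    (MultilinearMap.mkPiAlgebra 𝕜 (Fin d) 𝕜).compLinearMap (fun _ => (innerSL 𝕜 e).toLinearMap)
    with hPdef
  have hPapp : ∀ y : Fin d → H, P y = ∏ i, (inner 𝕜 e (y i) : 𝕜) := by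
    intro y; simp [hPdef]
  set T : ℝ → MultilinearMap 𝕜 (fun _ : Fin d => H) 𝕜 :=
    fun s => L.compLinearMap (fun _ => Q) + ((s : 𝕜)) • P with hTdef
  have hTapp : ∀ s (y : Fin d → H), T s y = L (fun i => Q (y i)) + (s : 𝕜) * ∏ i, (inner 𝕜 e (y i) : 𝕜) := by
    intro s y
    simp [hTdef, hPapp, smul_eq_mul]
  have hmem : ∀ s : ℝ, s ∈ Set.Icc (0:ℝ) 1 → T s ∈ {T : MultilinearMap 𝕜 (fun _ : Fin d => H) 𝕜 |
      (∀ (η : Equiv.Perm (Fin d)) (y : Fin d → H), T (y ∘ η) = T y) ∧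
      (∀ y : Fin d → H, ‖T y‖ ≤ ∏ i, ‖y i‖) ∧ ‖T x‖ = 1} := by
    intro s hs
    refine ⟨?_, ?_, ?_⟩
    · intro η y
      rw [hTapp, hTapp]
      congr 1
      · have : (fun i => Q ((y ∘ η) i)) = (fun i => Q (y i)) ∘ η := rfl
        rw [this, hLsym]
      · congr 1
        exact Equiv.prod_comp η (fun i => (inner 𝕜 e (y i) : 𝕜))
    · intro y
      rw [hTapp]
      have h1 : ‖L (fun i => Q (y i)) + (s : 𝕜) * ∏ i, (inner 𝕜 e (y i) : 𝕜)‖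
          ≤ ‖L (fun i => Q (y i))‖ + ‖(s : 𝕜) * ∏ i, (inner 𝕜 e (y i) : 𝕜)‖ := norm_add_le _ _
      refine h1.trans ?_
      have h2 : ‖L (fun i => Q (y i))‖ ≤ ∏ i, ‖Q (y i)‖ := hLbound _
      have h3 : ‖(s : 𝕜) * ∏ i, (inner 𝕜 e (y i) : 𝕜)‖ ≤ ∏ i, ‖(inner 𝕜 e (y i) : 𝕜)‖ := by
        rw [norm_mul, norm_prod, RCLike.norm_ofReal, abs_of_nonneg hs.1]
        exact mul_le_of_le_one_left (Finset.prod_nonneg fun i _ => norm_nonneg _) hs.2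
      have h4 := prod_add_prod_le hd (fun i => ‖Q (y i)‖) (fun i => ‖(inner 𝕜 e (y i) : 𝕜)‖)
        (fun i => ‖y i‖) (fun i => norm_nonneg _) (fun i => norm_nonneg _)
        (fun i => norm_nonneg _) (fun i => hQnorm (y i))
      linarith
    · rw [hTapp]
      have h5 : (fun i => Q (x i)) = x := funext hQx
      have h6 : ∏ i, (inner 𝕜 e (x i) : 𝕜) = 0 :=
        Finset.prod_eq_zero (Finset.mem_univ i0) (hex i0)
      rw [h5, h6, mul_zero, add_zero]
      exact hLattain
  have hinj : Function.Injective (fun s : ↥(Set.Icc (0:ℝ) 1) => T s.1) := by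
    intro s s' hss
    have h7 : ∀ s : ℝ, T s (fun _ => e) = (s : 𝕜) := by
      intro s
      rw [hTapp]
      have : L (fun i => Q e) = 0 := by
        have h8 : (fun _ : Fin d => Q e) = Function.update (fun _ : Fin d => Q e) i0 (0:H) := by
          funext j
          rcases eq_or_ne j i0 with rfl | hj
          · rw [Function.update_self, hQe]
          · rw [Function.update_of_ne hj]
        rw [h8]
        exact MultilinearMap.map_update_zero _ _ _
      rw [this, zero_add]
      simp [hee, he]
    have := congrArg (fun (M : MultilinearMap 𝕜 (fun _ : Fin d => H) 𝕜) => M (fun _ => e)) hss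
    simp only [h7] at this
    exact Subtype.ext (RCLike.ofReal_injective this)
  have : Infinite ↥(Set.Icc (0:ℝ) 1) := Set.Icc.infinite (by norm_num)
  exact Set.infinite_of_injective_forall_mem hinj (fun s => hmem s.1 s.2)


lemma slot_identity {d : ℕ} (L : MultilinearMap 𝕜 (fun _ : Fin d => H) 𝕜)
    (hLbound : ∀ y : Fin d → H, ‖L y‖ ≤ ∏ i, ‖y i‖)
    (y : Fin d → H) (hy : ∀ i, ‖y i‖ = 1) (hatt : ‖L y‖ = 1) (i : Fin d) (z : H) :
    L (Function.update y i z) = L y * (inner 𝕜 (y i) z : 𝕜) := by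
  have hb1 : ∀ v : H, ‖L (Function.update y i v)‖ ≤ ‖v‖ := by
    intro v
    refine (hLbound _).trans_eq ?_
    rw [← Finset.mul_prod_erase Finset.univ _ (Finset.mem_univ i)]
    rw [Function.update_self]
    have : ∏ j ∈ Finset.univ.erase i, ‖Function.update y i v j‖ = 1 := by
      apply Finset.prod_eq_one
      intro j hj
      rw [Function.update_of_ne (Finset.mem_erase.mp hj).1, hy j]
    rw [this, mul_one]
  set μ := L y with hμ
  set α : 𝕜 := (inner 𝕜 (y i) z : 𝕜) with hα
  set z' := z - α • y i with hz'
  have hinner : (inner 𝕜 (y i) z' : 𝕜) = 0 := by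
    rw [hz', inner_sub_right, inner_smul_right, inner_self_eq_norm_sq_to_K, hy i]
    push_cast; ring
  set C := L (Function.update y i z') with hC
  have hzero : C = 0 := by
    by_contra hC0
    have hCpos : 0 < ‖C‖ := norm_pos_iff.mpr hC0
    have key : ∀ t : 𝕜, ‖μ + t * C‖ ^ 2 ≤ 1 + ‖t‖ ^ 2 * ‖z'‖ ^ 2 := by
      intro t
      have h1 : L (Function.update y i (y i + t • z')) = μ + t * C := by
        rw [MultilinearMap.map_update_add, MultilinearMap.map_update_smul, Function.update_eq_self]
        rw [smul_eq_mul]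
      have h2 : ‖y i + t • z'‖ ^ 2 = 1 + ‖t‖ ^ 2 * ‖z'‖ ^ 2 := by
        rw [@norm_add_sq 𝕜]
        have h0 : (inner 𝕜 (y i) (t • z') : 𝕜) = 0 := by rw [inner_smul_right, hinner, mul_zero]
        rw [h0, norm_smul, hy i]
        simp [mul_pow]
      calc ‖μ + t * C‖ ^ 2 = ‖L (Function.update y i (y i + t • z'))‖ ^ 2 := by rw [h1]
        _ ≤ ‖y i + t • z'‖ ^ 2 := by
            apply pow_le_pow_left₀ (norm_nonneg _) (hb1 _)
        _ = _ := h2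
    set s : ℝ := ‖C‖ / (‖z'‖ ^ 2 + 1) with hs
    have hspos : 0 < s := by positivity
    have hseq : s * (‖z'‖ ^ 2 + 1) = ‖C‖ := by
      rw [hs, div_mul_cancel₀ _ (by positivity)]
    have hCk : ((‖C‖ : ℝ) : 𝕜) ≠ 0 := by
      simpa using hCpos.ne'
    set t : 𝕜 := (s : 𝕜) * μ * (starRingEnd 𝕜) C / (‖C‖ : 𝕜) with ht
    have htC : t * C = (s : 𝕜) * μ * (‖C‖ : 𝕜) := by
      have hcc : (starRingEnd 𝕜) C * C = ((‖C‖ : ℝ) : 𝕜) ^ 2 := by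
        rw [mul_comm]; exact RCLike.mul_conj C
      rw [ht]
      field_simp
      rw [mul_assoc, hcc]
    have hμnorm : ‖μ‖ = 1 := hatt
    have hLHS : ‖μ + t * C‖ = 1 + s * ‖C‖ := by
      rw [htC]
      have : μ + (s : 𝕜) * μ * (‖C‖ : 𝕜) = μ * (1 + ((s * ‖C‖ : ℝ) : 𝕜)) := by
        push_cast; ring
      rw [this, norm_mul, hμnorm, one_mul]
      have hnn : (0:ℝ) ≤ s * ‖C‖ := by positivity
      calc ‖1 + ((s * ‖C‖ : ℝ) : 𝕜)‖ = ‖((1 + s * ‖C‖ : ℝ) : 𝕜)‖ := by push_cast; ring_nf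
        _ = |1 + s * ‖C‖| := RCLike.norm_ofReal _
        _ = 1 + s * ‖C‖ := abs_of_nonneg (by linarith)
    have htnorm : ‖t‖ = s := by
      rw [ht, norm_div, norm_mul, norm_mul, hμnorm, RCLike.norm_conj, RCLike.norm_ofReal,
        RCLike.norm_ofReal, abs_of_nonneg hspos.le, abs_of_nonneg (norm_nonneg C)]
      field_simp
    have := key t
    rw [hLHS, htnorm] at this
    nlinarith [this, hseq, hspos, hCpos, sq_nonneg s, mul_pos hspos hCpos]
  have hzsum : α • y i + z' = z := by rw [hz']; abel
  calc L (Function.update y i z) = L (Function.update y i (α • y i + z')) := by rw [hzsum]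
    _ = α * L (Function.update y i (y i)) + C := by
        rw [MultilinearMap.map_update_add, MultilinearMap.map_update_smul, smul_eq_mul]
    _ = μ * α := by rw [hzero, Function.update_eq_self, add_zero, mul_comm]


lemma triple_dependent
    (ψ : H → H → H → 𝕜) (μ : 𝕜) (hμ : ‖μ‖ = 1)
    (hadd2 : ∀ u v v' w, ψ u (v + v') w = ψ u v w + ψ u v' w)
    (hsmul2 : ∀ u (r : 𝕜) v w, ψ u (r • v) w = r * ψ u v w)
    (hadd3 : ∀ u v w w', ψ u v (w + w') = ψ u v w + ψ u v w')
    (hsmul3 : ∀ u v (r : 𝕜) w, ψ u v (r • w) = r * ψ u v w)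
    (hswap12 : ∀ u v w, ψ u v w = ψ v u w)
    (hswap23 : ∀ u v w, ψ u v w = ψ u w v)
    (hslot : ∀ u v w, ‖u‖ = 1 → ‖v‖ = 1 → ‖w‖ = 1 → ‖ψ u v w‖ = 1 →
      ∀ z, ψ z v w = ψ u v w * (inner 𝕜 u z : 𝕜))
    (a b c : H) (ha : ‖a‖ = 1) (hb : ‖b‖ = 1) (hc : ‖c‖ = 1) (hval : ψ a b c = μ)
    (hli : ∀ p q r : 𝕜, p • a + q • b + r • c = 0 → p = 0 ∧ q = 0 ∧ r = 0) :
    False := by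
  have hμ0 : μ ≠ 0 := by intro h; rw [h] at hμ; simp at hμ
  have hab0 : a + b ≠ 0 := by
    intro h
    exact one_ne_zero (hli 1 1 0 (by rw [one_smul, one_smul, zero_smul, add_zero, h])).1
  have hac0 : a + c ≠ 0 := by
    intro h
    exact one_ne_zero (hli 1 0 1 (by rw [one_smul, one_smul, zero_smul, add_zero, h])).1
  have hbc0 : b + c ≠ 0 := by
    intro h
    exact one_ne_zero (hli 0 1 1 (by rw [one_smul, one_smul, zero_smul, zero_add, h])).2.1
  have expand : ∀ z A B, ψ z (A + B) (A + B) = ψ z A A + 2 * ψ z A B + ψ z B B := by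
    intro z A B
    rw [hadd2, hadd3, hadd3]
    have : ψ z B A = ψ z A B := by rw [hswap23]
    rw [this]; ring
  have pairSum : ∀ A B C : H, ‖A‖ = 1 → ‖B‖ = 1 → ‖C‖ = 1 → ψ A B C = μ → A + B ≠ 0 →
      ∀ z, ψ z (A + B) (A + B) = μ * ((‖A + B‖ ^ 2 : ℝ) : 𝕜) * (inner 𝕜 C z : 𝕜) := by
    intro A B C hA hB hC hv h0
    have hv1 : ‖ψ A B C‖ = 1 := by rw [hv]; exact hμ
    have sψ1 : ∀ z, ψ z B C = μ * (inner 𝕜 A z : 𝕜) := by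
      intro z; rw [hslot A B C hA hB hC hv1 z, hv]
    have hvBAC : ψ B A C = μ := by rw [← hswap12]; exact hv
    have sψ2 : ∀ z, ψ z A C = μ * (inner 𝕜 B z : 𝕜) := by
      intro z
      rw [hslot B A C hB hA hC (by rw [hvBAC]; exact hμ) z, hvBAC]
    have hnm0 : ‖A + B‖ ≠ 0 := norm_ne_zero_iff.mpr h0
    have hnmk : ((‖A + B‖ : ℝ) : 𝕜) ≠ 0 := by simpa using hnm0
    have hkinv : ((‖A + B‖ : ℝ) : 𝕜)⁻¹ * ((‖A + B‖ : ℝ) : 𝕜) = 1 := inv_mul_cancel₀ hnmk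
    set mh : H := ((‖A + B‖⁻¹ : ℝ) : 𝕜) • (A + B) with hmh
    have hmh1 : ‖mh‖ = 1 := by
      rw [hmh, norm_smul, RCLike.norm_ofReal, abs_inv, abs_of_nonneg (norm_nonneg (A + B)),
        inv_mul_cancel₀ hnm0]
    have claim1 : ∀ v, ψ C v (A + B) = μ * ((inner 𝕜 A v : 𝕜) + (inner 𝕜 B v : 𝕜)) := by
      intro v
      have e1 : ψ C v A = μ * (inner 𝕜 B v : 𝕜) := by
        rw [hswap12 C v A, hswap23 v C A]; exact sψ2 v
      have e2 : ψ C v B = μ * (inner 𝕜 A v : 𝕜) := by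
        rw [hswap12 C v B, hswap23 v C B]; exact sψ1 v
      rw [hadd3, e1, e2]
      ring
    have hinmh : (inner 𝕜 A mh : 𝕜) + (inner 𝕜 B mh : 𝕜)
        = ((‖A + B‖⁻¹ : ℝ) : 𝕜) * ((‖A + B‖ : ℝ) : 𝕜) ^ 2 := by
      rw [← inner_add_left, hmh, inner_smul_right, inner_self_eq_norm_sq_to_K]
    have att2 : ψ C mh mh = μ := by
      have e3 : ψ C mh mh = ((‖A + B‖⁻¹ : ℝ) : 𝕜) * ψ C mh (A + B) := by
        conv_lhs => rw [hmh]
        rw [hsmul3]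
      rw [e3, claim1 mh, hinmh]
      linear_combination (norm := (push_cast; ring1))
        (μ * (((‖A + B‖ : ℝ) : 𝕜)⁻¹ * ((‖A + B‖ : ℝ) : 𝕜) + 1)) * hkinv
    have hv2 : ‖ψ C mh mh‖ = 1 := by rw [att2]; exact hμ
    have s6 : ∀ z, ψ z mh mh = μ * (inner 𝕜 C z : 𝕜) := by
      intro z
      rw [hslot C mh mh hC hmh1 hmh1 hv2 z, att2]
    intro z
    have e7 : ψ z mh mh = ((‖A + B‖⁻¹ : ℝ) : 𝕜) * (((‖A + B‖⁻¹ : ℝ) : 𝕜) * ψ z (A + B) (A + B)) := by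
      conv_lhs => rw [hmh]
      rw [hsmul2, hsmul3]
    have e8 := s6 z
    rw [e7] at e8
    linear_combination (norm := (push_cast; ring1))
      (((‖A + B‖ : ℝ) : 𝕜) ^ 2) * e8
      - (ψ z (A + B) (A + B) * (1 + ((‖A + B‖ : ℝ) : 𝕜)⁻¹ * ((‖A + B‖ : ℝ) : 𝕜))) * hkinv
  -- top level slot identities
  have hv1 : ‖ψ a b c‖ = 1 := by rw [hval]; exact hμ
  have sbc : ∀ z, ψ z b c = μ * (inner 𝕜 a z : 𝕜) := by
    intro z; rw [hslot a b c ha hb hc hv1 z, hval]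
  have hvbac : ψ b a c = μ := by rw [← hswap12]; exact hval
  have sac : ∀ z, ψ z a c = μ * (inner 𝕜 b z : 𝕜) := by
    intro z; rw [hslot b a c hb ha hc (by rw [hvbac]; exact hμ) z, hvbac]
  have hvcab : ψ c a b = μ := by rw [hswap12 c a b, hswap23 a c b]; exact hval
  have sab : ∀ z, ψ z a b = μ * (inner 𝕜 c z : 𝕜) := by
    intro z; rw [hslot c a b hc ha hb (by rw [hvcab]; exact hμ) z, hvcab]
  have hvacb : ψ a c b = μ := by rw [← hswap23]; exact hval
  have hvbca : ψ b c a = μ := by rw [← hswap23, ← hswap12]; exact hval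
  have h1 := pairSum a b c ha hb hc hval hab0
  have h2 := pairSum a c b ha hc hb hvacb hac0
  have h3 := pairSum b c a hb hc ha hvbca hbc0
  -- the bisected triple
  have hnm0 : ‖a + b‖ ≠ 0 := norm_ne_zero_iff.mpr hab0
  have hnmk : ((‖a + b‖ : ℝ) : 𝕜) ≠ 0 := by simpa using hnm0
  have hkinv : ((‖a + b‖ : ℝ) : 𝕜)⁻¹ * ((‖a + b‖ : ℝ) : 𝕜) = 1 := inv_mul_cancel₀ hnmk
  set mh : H := ((‖a + b‖⁻¹ : ℝ) : 𝕜) • (a + b) with hmh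
  have hmh1 : ‖mh‖ = 1 := by
    rw [hmh, norm_smul, RCLike.norm_ofReal, abs_inv, abs_of_nonneg (norm_nonneg (a + b)),
      inv_mul_cancel₀ hnm0]
  have hmhc0 : mh + c ≠ 0 := by
    intro h
    have : ((‖a + b‖⁻¹ : ℝ) : 𝕜) • a + ((‖a + b‖⁻¹ : ℝ) : 𝕜) • b + (1 : 𝕜) • c = 0 := by
      rw [one_smul, ← smul_add, ← hmh, h]
    exact one_ne_zero (hli _ _ _ this).2.2
  have attm : ψ mh c mh = μ := by
    have e1 : ψ c (a + b) (a + b) = μ * ((‖a + b‖ ^ 2 : ℝ) : 𝕜) := by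
      rw [h1 c, inner_self_eq_norm_sq_to_K, hc]
      push_cast; ring
    have e2 : ψ c mh mh = ((‖a + b‖⁻¹ : ℝ) : 𝕜) * (((‖a + b‖⁻¹ : ℝ) : 𝕜) * ψ c (a + b) (a + b)) := by
      conv_lhs => rw [hmh]
      rw [hsmul2, hsmul3]
    rw [hswap12 mh c mh, e2, e1]
    linear_combination (norm := (push_cast; ring1))
      (μ * (((‖a + b‖ : ℝ) : 𝕜)⁻¹ * ((‖a + b‖ : ℝ) : 𝕜) + 1)) * hkinv
  have h4 := pairSum mh c mh hmh1 hc hmh1 attm hmhc0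
  -- main identity
  have main : ∀ z : H,
      ((((‖b + c‖ ^ 2 - 2) - 2 * (‖mh + c‖ ^ 2 - 2) * ‖a + b‖⁻¹ : ℝ) : 𝕜)) * (inner 𝕜 a z : 𝕜)
        + ((((‖a + c‖ ^ 2 - 2) - 2 * (‖mh + c‖ ^ 2 - 2) * ‖a + b‖⁻¹ : ℝ) : 𝕜)) * (inner 𝕜 b z : 𝕜)
        + (((4 - ‖a + b‖ ^ 2 : ℝ)) : 𝕜) * (inner 𝕜 c z : 𝕜) = 0 := by
    intro z
    have E1 : ψ z a a + 2 * (μ * (inner 𝕜 c z : 𝕜)) + ψ z b b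
        = μ * ((‖a + b‖ ^ 2 : ℝ) : 𝕜) * (inner 𝕜 c z : 𝕜) := by
      rw [← sab z, ← expand z a b]; exact h1 z
    have E2 : ψ z a a + 2 * (μ * (inner 𝕜 b z : 𝕜)) + ψ z c c
        = μ * ((‖a + c‖ ^ 2 : ℝ) : 𝕜) * (inner 𝕜 b z : 𝕜) := by
      rw [← sac z, ← expand z a c]; exact h2 z
    have E3 : ψ z b b + 2 * (μ * (inner 𝕜 a z : 𝕜)) + ψ z c c
        = μ * ((‖b + c‖ ^ 2 : ℝ) : 𝕜) * (inner 𝕜 a z : 𝕜) := by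
      rw [← sbc z, ← expand z b c]; exact h3 z
    have F1 : ψ z mh mh = μ * (inner 𝕜 c z : 𝕜) := by
      have e7 : ψ z mh mh
          = ((‖a + b‖⁻¹ : ℝ) : 𝕜) * (((‖a + b‖⁻¹ : ℝ) : 𝕜) * ψ z (a + b) (a + b)) := by
        conv_lhs => rw [hmh]
        rw [hsmul2, hsmul3]
      rw [e7, h1 z]
      linear_combination (norm := (push_cast; ring1))
        (μ * (inner 𝕜 c z : 𝕜) * (1 + ((‖a + b‖ : ℝ) : 𝕜)⁻¹ * ((‖a + b‖ : ℝ) : 𝕜))) * hkinv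
    have F2 : ψ z mh c = ((‖a + b‖⁻¹ : ℝ) : 𝕜) * (μ * ((inner 𝕜 a z : 𝕜) + (inner 𝕜 b z : 𝕜))) := by
      have e9 : ψ z mh c = ((‖a + b‖⁻¹ : ℝ) : 𝕜) * ψ z (a + b) c := by
        conv_lhs => rw [hmh]
        rw [hsmul2]
      rw [e9, hadd2, sac z, sbc z]
      ring
    have F3 : (inner 𝕜 mh z : 𝕜) = ((‖a + b‖⁻¹ : ℝ) : 𝕜) * ((inner 𝕜 a z : 𝕜) + (inner 𝕜 b z : 𝕜)) := by
      rw [hmh, inner_smul_left, RCLike.conj_ofReal, inner_add_left]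
    have G := h4 z
    rw [expand z mh c, F1, F2, F3] at G
    have hcc1 : 2 * ψ z c c
        = μ * (((‖a + c‖ ^ 2 - 2 : ℝ) : 𝕜) * (inner 𝕜 b z : 𝕜)
          + ((‖b + c‖ ^ 2 - 2 : ℝ) : 𝕜) * (inner 𝕜 a z : 𝕜)
          - ((‖a + b‖ ^ 2 - 2 : ℝ) : 𝕜) * (inner 𝕜 c z : 𝕜)) := by
      linear_combination (norm := (push_cast; ring1)) E2 + E3 - E1
    have hcc2 : ψ z c c
        = μ * (((‖mh + c‖ ^ 2 - 2 : ℝ) : 𝕜)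
            * (((‖a + b‖⁻¹ : ℝ) : 𝕜) * ((inner 𝕜 a z : 𝕜) + (inner 𝕜 b z : 𝕜)))
          - (inner 𝕜 c z : 𝕜)) := by
      linear_combination (norm := (push_cast; ring1)) G
    have hfinal : μ * (((((‖b + c‖ ^ 2 - 2) - 2 * (‖mh + c‖ ^ 2 - 2) * ‖a + b‖⁻¹ : ℝ) : 𝕜)) * (inner 𝕜 a z : 𝕜)
        + ((((‖a + c‖ ^ 2 - 2) - 2 * (‖mh + c‖ ^ 2 - 2) * ‖a + b‖⁻¹ : ℝ) : 𝕜)) * (inner 𝕜 b z : 𝕜)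
        + (((4 - ‖a + b‖ ^ 2 : ℝ)) : 𝕜) * (inner 𝕜 c z : 𝕜)) = 0 := by
      linear_combination (norm := (push_cast; ring1)) 2 * hcc2 - hcc1
    exact (mul_eq_zero.mp hfinal).resolve_left hμ0
  -- turn it into a vanishing vector
  have main' : ∀ z : H,
      (inner 𝕜 ((((‖b + c‖ ^ 2 - 2) - 2 * (‖mh + c‖ ^ 2 - 2) * ‖a + b‖⁻¹ : ℝ) : 𝕜) • a
        + ((((‖a + c‖ ^ 2 - 2) - 2 * (‖mh + c‖ ^ 2 - 2) * ‖a + b‖⁻¹ : ℝ) : 𝕜)) • b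
        + (((4 - ‖a + b‖ ^ 2 : ℝ)) : 𝕜) • c) z : 𝕜) = 0 := by
    intro z
    rw [inner_add_left, inner_add_left, inner_smul_left, inner_smul_left, inner_smul_left,
      RCLike.conj_ofReal, RCLike.conj_ofReal, RCLike.conj_ofReal]
    exact main z
  have hw0 : ((((‖b + c‖ ^ 2 - 2) - 2 * (‖mh + c‖ ^ 2 - 2) * ‖a + b‖⁻¹ : ℝ) : 𝕜) • a
        + ((((‖a + c‖ ^ 2 - 2) - 2 * (‖mh + c‖ ^ 2 - 2) * ‖a + b‖⁻¹ : ℝ) : 𝕜)) • b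
        + (((4 - ‖a + b‖ ^ 2 : ℝ)) : 𝕜) • c) = 0 :=
    inner_self_eq_zero.mp (main' _)
  have hcoef := hli _ _ _ hw0
  have h4ab' : (4 - ‖a + b‖ ^ 2 : ℝ) = 0 := by exact_mod_cast hcoef.2.2
  have hre : RCLike.re (inner 𝕜 a b : 𝕜) = 1 := by
    have hns := @norm_add_sq 𝕜 _ _ _ _ a b
    rw [ha, hb] at hns
    nlinarith [hns, h4ab']
  have habeq : a = b := by
    have hsub := @norm_sub_sq 𝕜 _ _ _ _ a b
    rw [ha, hb, hre] at hsub
    have h0 : ‖a - b‖ ^ 2 = 0 := by linarith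
    have h0' : ‖a - b‖ = 0 := by
      nlinarith [norm_nonneg (a - b)]
    rw [norm_eq_zero] at h0'
    exact sub_eq_zero.mp h0'
  exact one_ne_zero (hli 1 (-1) 0 (by
    rw [one_smul, neg_smul, one_smul, zero_smul, add_zero, habeq, add_neg_cancel])).1


lemma case_spanning {d : ℕ}
    (x : Fin d → H) (hx : ∀ i, ‖x i‖ = 1)
    (L : MultilinearMap 𝕜 (fun _ : Fin d => H) 𝕜)
    (hLsym : ∀ (η : Equiv.Perm (Fin d)) (y : Fin d → H), L (y ∘ η) = L y)
    (hLbound : ∀ y : Fin d → H, ‖L y‖ ≤ ∏ i, ‖y i‖)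
    (hLattain : ‖L x‖ = 1)
    (i j k : Fin d) (hij : i ≠ j) (hik : i ≠ k) (hjk : j ≠ k)
    (hIND : LinearIndependent 𝕜 ![x i, x j, x k]) : False := by
  classical
  set y3 : H → H → H → (Fin d → H) := fun u v w =>
    Function.update (Function.update (Function.update x i u) j v) k w with hy3
  have hψ : ∀ u v w, L (y3 u v w)
      = L (Function.update (Function.update (Function.update x i u) j v) k w) := by
    intro u v w; rw [hy3]
  set ψ : H → H → H → 𝕜 := fun u v w => L (y3 u v w) with hψdef
  have hψ' : ∀ u v w, ψ u v w = L (y3 u v w) := fun _ _ _ => rfl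
  -- coordinates
  have ci : ∀ u v w, y3 u v w i = u := by
    intro u v w
    rw [hy3]
    simp only []
    rw [Function.update_of_ne hik, Function.update_of_ne hij, Function.update_self]
  have cj : ∀ u v w, y3 u v w j = v := by
    intro u v w
    rw [hy3]; simp only []
    rw [Function.update_of_ne hjk, Function.update_self]
  have ck : ∀ u v w, y3 u v w k = w := by
    intro u v w
    rw [hy3]; simp only []
    rw [Function.update_self]
  have cl : ∀ u v w l, l ≠ i → l ≠ j → l ≠ k → y3 u v w l = x l := by
    intro u v w l h1 h2 h3
    rw [hy3]; simp only []
    rw [Function.update_of_ne h3, Function.update_of_ne h2, Function.update_of_ne h1]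
  have hy3x : y3 (x i) (x j) (x k) = x := by
    funext l
    by_cases h1 : l = i
    · subst h1; rw [ci]
    by_cases h2 : l = j
    · subst h2; rw [cj]
    by_cases h3 : l = k
    · subst h3; rw [ck]
    exact cl _ _ _ l h1 h2 h3
  have hy3unit : ∀ u v w, ‖u‖ = 1 → ‖v‖ = 1 → ‖w‖ = 1 → ∀ l, ‖y3 u v w l‖ = 1 := by
    intro u v w hu hv hw l
    by_cases h1 : l = i
    · subst h1; rw [ci]; exact hu
    by_cases h2 : l = j
    · subst h2; rw [cj]; exact hv
    by_cases h3 : l = k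
    · subst h3; rw [ck]; exact hw
    rw [cl _ _ _ l h1 h2 h3]; exact hx l
  have hupd : ∀ u v w z, Function.update (y3 u v w) i z = y3 z v w := by
    intro u v w z
    funext l
    by_cases h1 : l = i
    · subst h1; rw [Function.update_self, ci]
    rw [Function.update_of_ne h1]
    by_cases h2 : l = j
    · subst h2; rw [cj, cj]
    by_cases h3 : l = k
    · subst h3; rw [ck, ck]
    rw [cl _ _ _ l h1 h2 h3, cl _ _ _ l h1 h2 h3]
  -- symmetry
  have hswap12 : ∀ u v w, ψ u v w = ψ v u w := by
    intro u v w
    have hcomp : y3 u v w ∘ (Equiv.swap i j) = y3 v u w := by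
      funext l
      simp only [Function.comp_apply]
      by_cases h1 : l = i
      · subst h1; rw [Equiv.swap_apply_left, cj, ci]
      by_cases h2 : l = j
      · subst h2; rw [Equiv.swap_apply_right, ci, cj]
      rw [Equiv.swap_apply_of_ne_of_ne h1 h2]
      by_cases h3 : l = k
      · subst h3; rw [ck, ck]
      rw [cl _ _ _ l h1 h2 h3, cl _ _ _ l h1 h2 h3]
    rw [hψ', hψ', ← hcomp, hLsym]
  have hswap23 : ∀ u v w, ψ u v w = ψ u w v := by
    intro u v w
    have hcomp : y3 u v w ∘ (Equiv.swap j k) = y3 u w v := by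
      funext l
      simp only [Function.comp_apply]
      by_cases h2 : l = j
      · subst h2; rw [Equiv.swap_apply_left, ck, cj]
      by_cases h3 : l = k
      · subst h3; rw [Equiv.swap_apply_right, cj, ck]
      rw [Equiv.swap_apply_of_ne_of_ne h2 h3]
      by_cases h1 : l = i
      · subst h1; rw [ci, ci]
      rw [cl _ _ _ l h1 h2 h3, cl _ _ _ l h1 h2 h3]
    rw [hψ', hψ', ← hcomp, hLsym]
  -- multilinearity in slots 2 and 3
  have reorder : ∀ u v w, y3 u v w
      = Function.update (Function.update (Function.update x i u) k w) j v := by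
    intro u v w
    rw [hy3]; simp only []
    rw [Function.update_comm hjk]
  have hadd3 : ∀ u v w w', ψ u v (w + w') = ψ u v w + ψ u v w' := by
    intro u v w w'
    rw [hψ', hψ', hψ', hy3]; simp only []
    exact L.map_update_add _ k w w'
  have hsmul3 : ∀ u v (r : 𝕜) w, ψ u v (r • w) = r * ψ u v w := by
    intro u v r w
    rw [hψ', hψ', hy3]; simp only []
    exact L.map_update_smul _ k r w
  have hadd2 : ∀ u v v' w, ψ u (v + v') w = ψ u v w + ψ u v' w := by
    intro u v v' w
    rw [hψ', hψ', hψ', reorder, reorder, reorder]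
    exact L.map_update_add _ j v v'
  have hsmul2 : ∀ u (r : 𝕜) v w, ψ u (r • v) w = r * ψ u v w := by
    intro u r v w
    rw [hψ', hψ', reorder, reorder]
    exact L.map_update_smul _ j r v
  -- slot identity
  have hslot : ∀ u v w, ‖u‖ = 1 → ‖v‖ = 1 → ‖w‖ = 1 → ‖ψ u v w‖ = 1 →
      ∀ z, ψ z v w = ψ u v w * (inner 𝕜 u z : 𝕜) := by
    intro u v w hu hv hw hval z
    have h := slot_identity L hLbound (y3 u v w) (hy3unit u v w hu hv hw) hval i z
    rw [hupd u v w z, ci] at h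
    exact h
  -- independence
  have hli : ∀ p q r : 𝕜, p • (x i) + q • (x j) + r • (x k) = 0 → p = 0 ∧ q = 0 ∧ r = 0 := by
    intro p q r h0
    have h := Fintype.linearIndependent_iff.mp hIND ![p, q, r] ?_
    · exact ⟨h 0, h 1, h 2⟩
    · simpa [Fin.sum_univ_three] using h0
  have hval : ψ (x i) (x j) (x k) = L x := by
    rw [hψ', hy3x]
  exact triple_dependent ψ (L x) hLattain hadd2 hsmul2 hadd3 hsmul3 hswap12 hswap23 hslot
    (x i) (x j) (x k) (hx i) (hx j) (hx k) hval hli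


lemma exists_indep_triple {d : ℕ} (hdim : 3 ≤ Module.rank 𝕜 H) (hd : 1 < d)
    (x : Fin d → H) (hx : ∀ i, ‖x i‖ = 1)
    (hperp : ¬ ∃ e : H, ‖e‖ = 1 ∧ ∀ i, (inner 𝕜 e (x i) : 𝕜) = 0) :
    ∃ i j k : Fin d, i ≠ j ∧ i ≠ k ∧ j ≠ k ∧ LinearIndependent 𝕜 ![x i, x j, x k] := by
  classical
  set V : Submodule 𝕜 H := Submodule.span 𝕜 (Set.range x) with hV
  haveI hfin : FiniteDimensional 𝕜 V := FiniteDimensional.span_of_finite 𝕜 (Set.finite_range x)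
  have hVbot : Vᗮ = ⊥ := by
    by_contra hne
    obtain ⟨e', heV, he0⟩ := (Submodule.ne_bot_iff _).mp hne
    have hne' : ‖e'‖ ≠ 0 := norm_ne_zero_iff.mpr he0
    refine hperp ⟨((‖e'‖⁻¹ : ℝ) : 𝕜) • e', ?_, ?_⟩
    · rw [norm_smul, RCLike.norm_ofReal, abs_inv, abs_of_nonneg (norm_nonneg e'),
        inv_mul_cancel₀ hne']
    · intro i
      have hxiV : x i ∈ V := Submodule.subset_span (Set.mem_range_self i)
      have h0 : (inner 𝕜 (x i) e' : 𝕜) = 0 := heV _ hxiV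
      have h0' : (inner 𝕜 e' (x i) : 𝕜) = 0 := by
        have hcg := congrArg (starRingEnd 𝕜) h0
        rw [map_zero, inner_conj_symm] at hcg
        exact hcg
      rw [inner_smul_left, h0', mul_zero]
  have hVtop : V = ⊤ := Submodule.orthogonal_eq_bot_iff.mp hVbot
  obtain ⟨b, hbsub, hbspan, hbli⟩ := exists_linearIndependent 𝕜 (Set.range x)
  have hbfin : b.Finite := (Set.finite_range x).subset hbsub
  have hbbasis : Module.Basis b 𝕜 H := Module.Basis.mk hbli (by
    rw [Subtype.range_coe, hbspan, ← hV, hVtop])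
  have hcard3 : 3 ≤ hbfin.toFinset.card := by
    have h1 : (Cardinal.mk ↥b) = Module.rank 𝕜 H := hbbasis.mk_eq_rank''
    have h2 : (Cardinal.mk ↥b) = (hbfin.toFinset.card : Cardinal) := by
      have hco : (↑hbfin.toFinset : Set H) = b := hbfin.coe_toFinset
      rw [← Cardinal.mk_coe_finset]
      exact Cardinal.mk_congr (Equiv.setCongr hco.symm)
    rw [h2] at h1
    rw [← h1] at hdim
    exact_mod_cast hdim
  set t := hbfin.toFinset with ht
  obtain ⟨va, hva⟩ : t.Nonempty := Finset.card_pos.mp (by omega)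
  have hcard2 : 2 ≤ (t.erase va).card := by
    rw [Finset.card_erase_of_mem hva]; omega
  obtain ⟨vb, hvb⟩ : (t.erase va).Nonempty := Finset.card_pos.mp (by omega)
  have hcard1 : 1 ≤ ((t.erase va).erase vb).card := by
    rw [Finset.card_erase_of_mem hvb]; omega
  obtain ⟨vc, hvc⟩ : ((t.erase va).erase vb).Nonempty := Finset.card_pos.mp (by omega)
  have hvb' : vb ∈ t := Finset.mem_of_mem_erase hvb
  have hvc' : vc ∈ t := Finset.mem_of_mem_erase (Finset.mem_of_mem_erase hvc)
  have hab : vb ≠ va := (Finset.mem_erase.mp hvb).1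
  have hcb : vc ≠ vb := (Finset.mem_erase.mp hvc).1
  have hca : vc ≠ va := (Finset.mem_erase.mp (Finset.mem_of_mem_erase hvc)).1
  have hmemb : ∀ v, v ∈ t → v ∈ b := by
    intro v hv; rwa [ht, Set.Finite.mem_toFinset] at hv
  -- independence of the triple
  have htriple : LinearIndependent 𝕜 ![va, vb, vc] := by
    set f : Fin 3 → ↥b := ![⟨va, hmemb va hva⟩, ⟨vb, hmemb vb hvb'⟩, ⟨vc, hmemb vc hvc'⟩] with hf
    have hfinj : Function.Injective f := by
      intro l l' hll
      have hvals : (![va, vb, vc] : Fin 3 → H) l = ![va, vb, vc] l' := by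
        have := congrArg Subtype.val hll
        fin_cases l <;> fin_cases l' <;> simpa [hf] using this
      fin_cases l <;> fin_cases l' <;> simp_all <;>
        first
          | rfl
          | (exact absurd hvals (by tauto))
    have hcomp := hbli.comp f hfinj
    have : (Subtype.val ∘ f) = ![va, vb, vc] := by
      funext l; fin_cases l <;> simp [hf]
    rwa [this] at hcomp
  -- get indices
  have hrange : ∀ v, v ∈ t → ∃ i, x i = v := by
    intro v hv
    have : v ∈ Set.range x := hbsub (hmemb v hv)
    exact this
  obtain ⟨i, hi⟩ := hrange va hva
  obtain ⟨j, hj⟩ := hrange vb hvb'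
  obtain ⟨k, hk⟩ := hrange vc hvc'
  refine ⟨i, j, k, ?_, ?_, ?_, ?_⟩
  · intro h; rw [h, hj] at hi; exact hab hi
  · intro h; rw [h, hk] at hi; exact hca hi
  · intro h; rw [h, hk] at hj; exact hcb hj
  · rw [hi, hj, hk]; exact htriple


end Auxiliary

/-- Let `H` be an inner product space over `ℝ` or `ℂ` of dimension at least 3,
`d > 1`, and `x₁, …, x_d` unit vectors.  If some symmetric continuous `d`-linear form of norm
one attains its norm at `(x₁, …, x_d)`, then infinitely many symmetric `d`-linear forms of norm
one attain their norm at `(x₁, …, x_d)`. -/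
theorem infinitely_many_symmetric_forms_attaining
    {𝕜 : Type*} [RCLike 𝕜] {H : Type*} [NormedAddCommGroup H] [InnerProductSpace 𝕜 H]
    (hdim : 3 ≤ Module.rank 𝕜 H) (d : ℕ) (hd : 1 < d)
    (x : Fin d → H) (hx : ∀ i, ‖x i‖ = 1)
    (L : MultilinearMap 𝕜 (fun _ : Fin d => H) 𝕜)
    (hLsym : ∀ (η : Equiv.Perm (Fin d)) (y : Fin d → H), L (y ∘ η) = L y)
    (hLbound : ∀ y : Fin d → H, ‖L y‖ ≤ ∏ i, ‖y i‖)
    (hLattain : ‖L x‖ = 1) :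
    {T : MultilinearMap 𝕜 (fun _ : Fin d => H) 𝕜 |
      (∀ (η : Equiv.Perm (Fin d)) (y : Fin d → H), T (y ∘ η) = T y) ∧
      (∀ y : Fin d → H, ‖T y‖ ≤ ∏ i, ‖y i‖) ∧ ‖T x‖ = 1}.Infinite := by
  by_cases hperp : ∃ e : H, ‖e‖ = 1 ∧ ∀ i, (inner 𝕜 e (x i) : 𝕜) = 0
  · obtain ⟨e, he, hex⟩ := hperp
    exact case_perp hd x hx L hLsym hLbound hLattain e he hex
  · obtain ⟨i, j, k, hij, hik, hjk, hIND⟩ := exists_indep_triple hdim hd x hx hperp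
    exact (case_spanning x hx L hLsym hLbound hLattain i j k hij hik hjk hIND).elim
end

section
/- Let H be a real inner product space, d > 1, L a symmetric d-linear form on H of norm one, H₁ ⊆ H a finite-dimensional subspace, P : H → H₁ the orthogonal projection, and w a unit vector orthogonal to H₁. Then for any a ∈ [−1,1], the d-linear form L_a(y₁,...,y_d) := L(P y₁, ..., P y_d) + a ⟨y₁,w⟩⋯⟨y_d,w⟩ is symmetric and satisfies |L_a(y,...,y)| ≤ ‖y‖^d for all y ∈ H. -/
open scoped BigOperators RealInnerProductSpace

lemma pow_sum_le_aux (d : ℕ) (hd : 1 < d) (p q r : ℝ) (hp : 0 ≤ p) (hq : 0 ≤ q)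
    (hr : 0 ≤ r) (h : p ^ 2 + q ^ 2 ≤ r ^ 2) : p ^ d + q ^ d ≤ r ^ d := by
  obtain ⟨k, rfl⟩ : ∃ k, d = 2 + k := ⟨d - 2, by omega⟩
  have hpr : p ≤ r := by nlinarith
  have hqr : q ≤ r := by nlinarith
  have h1 : p ^ (2 + k) ≤ p ^ 2 * r ^ k := by
    rw [pow_add]
    exact mul_le_mul_of_nonneg_left (pow_le_pow_left₀ hp hpr k) (by positivity)
  have h2 : q ^ (2 + k) ≤ q ^ 2 * r ^ k := by
    rw [pow_add]
    exact mul_le_mul_of_nonneg_left (pow_le_pow_left₀ hq hqr k) (by positivity)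
  calc p ^ (2 + k) + q ^ (2 + k) ≤ (p ^ 2 + q ^ 2) * r ^ k := by nlinarith [pow_nonneg hr k]
    _ ≤ r ^ 2 * r ^ k := mul_le_mul_of_nonneg_right h (by positivity)
    _ = r ^ (2 + k) := (pow_add r 2 k).symm

/-- Let `H` be a real inner product space, `d > 1`, `L` a symmetric `d`-linear
form on `H` of norm one, `K ⊆ H` a finite-dimensional subspace with orthogonal projection `P`,
and `w` a unit vector orthogonal to `K`.  Then for any `a ∈ [−1,1]` the `d`-linear form
`L_a(y₁,…,y_d) = L(P y₁, …, P y_d) + a ⟨y₁,w⟩⋯⟨y_d,w⟩` is symmetric and satisfies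
`|L_a(y,…,y)| ≤ ‖y‖^d` for every `y`. -/
theorem perturbed_form_symmetric_and_bounded
    {H : Type*} [NormedAddCommGroup H] [InnerProductSpace ℝ H]
    (d : ℕ) (hd : 1 < d)
    (L : MultilinearMap ℝ (fun _ : Fin d => H) ℝ)
    (hLsym : ∀ (η : Equiv.Perm (Fin d)) (y : Fin d → H), L (y ∘ η) = L y)
    (hLbound : ∀ y : Fin d → H, |L y| ≤ ∏ i, ‖y i‖)
    (K : Submodule ℝ H) [FiniteDimensional ℝ K]
    (w : H) (hw : ‖w‖ = 1) (hwK : w ∈ Kᗮ)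
    (a : ℝ) (ha : a ∈ Set.Icc (-1 : ℝ) 1) :
    (∀ (η : Equiv.Perm (Fin d)) (y : Fin d → H),
        L (fun i => (K.orthogonalProjectionOnto ((y ∘ η) i) : H)) + a * ∏ i, ⟪(y ∘ η) i, w⟫
          = L (fun i => (K.orthogonalProjectionOnto (y i) : H)) + a * ∏ i, ⟪y i, w⟫) ∧
    (∀ y : H,
        |L (fun _ => (K.orthogonalProjectionOnto y : H)) + a * ∏ _i : Fin d, ⟪y, w⟫| ≤ ‖y‖ ^ d) := by
  constructor
  · intro η y
    have h1 : L (fun i => (K.orthogonalProjectionOnto ((y ∘ η) i) : H))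
        = L ((fun i => (K.orthogonalProjectionOnto (y i) : H)) ∘ η) := rfl
    rw [h1, hLsym]
    congr 1
    exact congrArg (a * ·) (Equiv.prod_comp η fun i => ⟪y i, w⟫)
  · intro y
    set Py : H := (K.orthogonalProjectionOnto y : H) with hPy
    have hPymem : Py ∈ K := (K.orthogonalProjectionOnto y).2
    have hL : |L (fun _ => Py)| ≤ ‖Py‖ ^ d := by
      calc |L (fun _ => Py)| ≤ ∏ _i : Fin d, ‖Py‖ := hLbound _
        _ = ‖Py‖ ^ d := by rw [Finset.prod_const, Finset.card_univ, Fintype.card_fin]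
    have hinner : ⟪y, w⟫ = ⟪y - Py, w⟫ := by
      have : ⟪Py, w⟫ = 0 := hwK Py hPymem
      rw [inner_sub_left, this, sub_zero]
    have htle : |⟪y, w⟫| ≤ ‖y - Py‖ := by
      rw [hinner]
      calc |⟪y - Py, w⟫| ≤ ‖y - Py‖ * ‖w‖ := abs_real_inner_le_norm _ _
        _ = ‖y - Py‖ := by rw [hw, mul_one]
    have hpyth : ‖Py‖ ^ 2 + ‖y - Py‖ ^ 2 = ‖y‖ ^ 2 := by
      have horth : ⟪Py, y - Py⟫ = 0 :=
        (K.sub_starProjection_mem_orthogonal y Py hPymem).symm ▸ rfl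
      have : ‖Py + (y - Py)‖ ^ 2 = ‖Py‖ ^ 2 + 2 * ⟪Py, y - Py⟫ + ‖y - Py‖ ^ 2 :=
        norm_add_sq_real _ _
      rw [add_sub_cancel] at this
      rw [this, horth]; ring
    have key : ‖Py‖ ^ d + |⟪y, w⟫| ^ d ≤ ‖y‖ ^ d := by
      apply pow_sum_le_aux d hd _ _ _ (norm_nonneg _) (abs_nonneg _) (norm_nonneg _)
      have h2 : |⟪y, w⟫| ^ 2 ≤ ‖y - Py‖ ^ 2 := pow_le_pow_left₀ (abs_nonneg _) htle 2
      linarith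
    have habs : |a| ≤ 1 := abs_le.2 ⟨ha.1, ha.2⟩
    calc |L (fun _ => Py) + a * ∏ _i : Fin d, ⟪y, w⟫|
        ≤ |L (fun _ => Py)| + |a * ∏ _i : Fin d, ⟪y, w⟫| := abs_add_le _ _
      _ ≤ ‖Py‖ ^ d + |⟪y, w⟫| ^ d := by
          refine add_le_add hL ?_
          rw [abs_mul, Finset.prod_const, Finset.card_univ, Fintype.card_fin, abs_pow]
          exact mul_le_of_le_one_left (by positivity) habs
      _ ≤ ‖y‖ ^ d := key
end

section
/- Every symmetric tensor z ∈ ⊗^d ℂ² has symmetric decomposable rank 1; that is, there exist vectors z₁, ..., z_d ∈ ℂ² such that z = z₁ ∨ z₂ ∨ ⋯ ∨ z_d. -/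
open scoped BigOperators

/-- The linear map permuting tensor factors: `(permLin η z) j = z (j ∘ η)`. -/
noncomputable def permLin (𝕜 : Type*) [RCLike 𝕜] (d n : ℕ) (η : Equiv.Perm (Fin d)) :
    EuclideanSpace 𝕜 (Fin d → Fin n) →ₗ[𝕜] EuclideanSpace 𝕜 (Fin d → Fin n) where
  toFun z := WithLp.toLp 2 (fun j => z (j ∘ η))
  map_add' _ _ := rfl
  map_smul' _ _ := rfl

/-- A tensor is symmetric if it is invariant under all permutations of factors. -/
def IsSymTensor {𝕜 : Type*} [RCLike 𝕜] {d n : ℕ}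
    (z : EuclideanSpace 𝕜 (Fin d → Fin n)) : Prop :=
  ∀ η : Equiv.Perm (Fin d), permLin 𝕜 d n η z = z

/-- The elementary tensor `x 1 ⊗ ⋯ ⊗ x d`. -/
noncomputable def eTensor {𝕜 : Type*} [RCLike 𝕜] {d n : ℕ}
    (x : Fin d → EuclideanSpace 𝕜 (Fin n)) : EuclideanSpace 𝕜 (Fin d → Fin n) :=
  WithLp.toLp 2 (fun j => ∏ i, x i (j i))

/-- The symmetrization operator `σ`. -/
noncomputable def symmetrize {𝕜 : Type*} [RCLike 𝕜] {d n : ℕ}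
    (z : EuclideanSpace 𝕜 (Fin d → Fin n)) : EuclideanSpace 𝕜 (Fin d → Fin n) :=
  ((d.factorial : 𝕜)⁻¹) • ∑ η : Equiv.Perm (Fin d), permLin 𝕜 d n η z

/-- The decomposable symmetric tensor `x 1 ∨ ⋯ ∨ x d`. -/
noncomputable def vee {𝕜 : Type*} [RCLike 𝕜] {d n : ℕ}
    (x : Fin d → EuclideanSpace 𝕜 (Fin n)) : EuclideanSpace 𝕜 (Fin d → Fin n) :=
  symmetrize (eTensor x)

/-- The tensor rank. -/
noncomputable def tensorRank {𝕜 : Type*} [RCLike 𝕜] {d n : ℕ}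
    (z : EuclideanSpace 𝕜 (Fin d → Fin n)) : ℕ :=
  sInf {r : ℕ | ∃ v : Fin r → Fin d → EuclideanSpace 𝕜 (Fin n), z = ∑ i, eTensor (v i)}

/-- The symmetric decomposable rank. -/
noncomputable def symDecRank {𝕜 : Type*} [RCLike 𝕜] {d n : ℕ}
    (z : EuclideanSpace 𝕜 (Fin d → Fin n)) : ℕ :=
  sInf {r : ℕ | ∃ v : Fin r → Fin d → EuclideanSpace 𝕜 (Fin n), z = ∑ i, vee (v i)}

/-- The injective (spectral) norm. -/
noncomputable def injNorm {𝕜 : Type*} [RCLike 𝕜] {d n : ℕ}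
    (z : EuclideanSpace 𝕜 (Fin d → Fin n)) : ℝ :=
  sSup {c : ℝ | ∃ y : Fin d → EuclideanSpace 𝕜 (Fin n),
    (∀ i, ‖y i‖ = 1) ∧ c = ‖(inner 𝕜 (eTensor y) z : 𝕜)‖}

/-- The projective (nuclear) norm. -/
noncomputable def projNorm {𝕜 : Type*} [RCLike 𝕜] {d n : ℕ}
    (z : EuclideanSpace 𝕜 (Fin d → Fin n)) : ℝ :=
  sInf {c : ℝ | ∃ (r : ℕ) (v : Fin r → Fin d → EuclideanSpace 𝕜 (Fin n)),
    z = ∑ i, eTensor (v i) ∧ c = ∑ i, ∏ j, ‖v i j‖}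

open Polynomial

-- auxiliary development
namespace SymC2

variable {d : ℕ}

def wt (j : Fin d → Fin 2) : ℕ := ∑ i, (j i : ℕ)

lemma wt_le (j : Fin d → Fin 2) : wt j ≤ d := by
  calc wt j ≤ ∑ _i : Fin d, 1 :=
        Finset.sum_le_sum fun i _ => Nat.lt_succ_iff.mp (j i).isLt
    _ = d := by simp

lemma wt_eq_card (j : Fin d → Fin 2) :
    wt j = (Finset.univ.filter fun i => j i = 1).card := by
  rw [Finset.card_filter]
  refine Finset.sum_congr rfl fun i _ => ?_
  have h : ∀ a : Fin 2, (a : ℕ) = if a = 1 then 1 else 0 := by decide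
  exact h (j i)

lemma card_wt (k : ℕ) :
    (Finset.univ.filter fun j : Fin d → Fin 2 => wt j = k).card = d.choose k := by
  have h2 : (Finset.powersetCard k (Finset.univ : Finset (Fin d))).card = d.choose k := by
    rw [Finset.card_powersetCard, Finset.card_univ, Fintype.card_fin]
  rw [← h2]
  refine Finset.card_bij (fun j _ => Finset.univ.filter fun i => j i = 1) ?_ ?_ ?_
  · intro j hj
    rw [Finset.mem_powersetCard]
    refine ⟨Finset.filter_subset _ _, ?_⟩
    rw [← wt_eq_card]
    simpa using hj
  · intro j1 _ j2 _ he
    funext i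
    have h01 : ∀ a b : Fin 2, (a = 1 ↔ b = 1) → a = b := by decide
    have hi := Finset.ext_iff.mp he i
    simp only [Finset.mem_filter, Finset.mem_univ, true_and] at hi
    exact h01 _ _ hi
  · intro S hS
    rw [Finset.mem_powersetCard] at hS
    have hmem : ∀ i, ((if i ∈ S then 1 else 0 : Fin 2) = 1) ↔ i ∈ S := by
      intro i
      by_cases h : i ∈ S <;> simp [h]
    refine ⟨fun i => if i ∈ S then 1 else 0, ?_, ?_⟩
    · simp only [Finset.mem_filter, Finset.mem_univ, true_and]
      rw [wt_eq_card, ← hS.2]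
      congr 1
      ext i
      simp only [Finset.mem_filter, Finset.mem_univ, true_and]
      exact hmem i
    · ext i
      simp only [Finset.mem_filter, Finset.mem_univ, true_and]
      exact hmem i

lemma exists_perm {j j' : Fin d → Fin 2} (h : wt j = wt j') :
    ∃ η : Equiv.Perm (Fin d), ∀ i, j (η i) = j' i := by
  classical
  have hcard : Fintype.card {i // j' i = 1} = Fintype.card {i // j i = 1} := by
    rw [Fintype.card_subtype, Fintype.card_subtype, ← wt_eq_card, ← wt_eq_card, h]
  have hcard' : Fintype.card {i // ¬ j' i = 1} = Fintype.card {i // ¬ j i = 1} := by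
    rw [Fintype.card_subtype_compl, Fintype.card_subtype_compl, hcard]
  let e1 : {i // j' i = 1} ≃ {i // j i = 1} := Fintype.equivOfCardEq hcard
  let e2 : {i // ¬ j' i = 1} ≃ {i // ¬ j i = 1} := Fintype.equivOfCardEq hcard'
  refine ⟨(Equiv.sumCompl fun i => j' i = 1).symm.trans ((e1.sumCongr e2).trans
      (Equiv.sumCompl fun i => j i = 1)), fun i => ?_⟩
  by_cases hi : j' i = 1
  · rw [Equiv.trans_apply, Equiv.trans_apply, Equiv.sumCompl_symm_apply_of_pos (p := fun i => j' i = 1) hi,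
      Equiv.sumCongr_apply, Sum.map_inl, Equiv.sumCompl_apply_inl]
    rw [(e1 ⟨i, hi⟩).2, hi]
  · rw [Equiv.trans_apply, Equiv.trans_apply, Equiv.sumCompl_symm_apply_of_neg (p := fun i => j' i = 1) hi,
      Equiv.sumCongr_apply, Sum.map_inr, Equiv.sumCompl_apply_inr]
    have h2 : ∀ a b : Fin 2, ¬a = 1 → ¬b = 1 → a = b := by decide
    exact h2 _ _ (e2 ⟨i, hi⟩).2 hi

lemma permLin_apply (η : Equiv.Perm (Fin d)) (w : EuclideanSpace ℂ (Fin d → Fin 2))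
    (j : Fin d → Fin 2) : permLin ℂ d 2 η w j = w (j ∘ η) := rfl

lemma symm_const {w : EuclideanSpace ℂ (Fin d → Fin 2)} (hw : IsSymTensor w)
    {j j' : Fin d → Fin 2} (h : wt j = wt j') : w j = w j' := by
  obtain ⟨η, hη⟩ := exists_perm (j := j') (j' := j) h.symm
  have h1 : j' ∘ η = j := funext fun i => hη i
  calc w j = w (j' ∘ η) := by rw [h1]
    _ = permLin ℂ d 2 η w j' := rfl
    _ = w j' := by rw [hw η]


noncomputable def Phi (w : EuclideanSpace ℂ (Fin d → Fin 2)) : Polynomial ℂ :=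
  ∑ j : Fin d → Fin 2, Polynomial.C (w j) * Polynomial.X ^ wt j

lemma coeff_Phi (w : EuclideanSpace ℂ (Fin d → Fin 2)) (k : ℕ) :
    (Phi w).coeff k = ∑ j ∈ Finset.univ.filter fun j : Fin d → Fin 2 => wt j = k, w j := by
  rw [Phi, Polynomial.finset_sum_coeff, Finset.sum_filter]
  refine Finset.sum_congr rfl fun j _ => ?_
  rw [Polynomial.coeff_C_mul, Polynomial.coeff_X_pow]
  by_cases h : wt j = k
  · simp [h]
  · rw [if_neg fun hk => h hk.symm, if_neg h, mul_zero]

lemma coeff_Phi_symm {w : EuclideanSpace ℂ (Fin d → Fin 2)} (hw : IsSymTensor w)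
    (j : Fin d → Fin 2) :
    (Phi w).coeff (wt j) = (d.choose (wt j) : ℂ) * w j := by
  have h : ∀ j' ∈ Finset.univ.filter fun j'' : Fin d → Fin 2 => wt j'' = wt j, w j' = w j :=
    fun j' hj' => symm_const hw (Finset.mem_filter.mp hj').2
  rw [coeff_Phi, Finset.sum_congr rfl h, Finset.sum_const, card_wt, nsmul_eq_mul]

lemma euc_smul_apply (c : ℂ) (u : EuclideanSpace ℂ (Fin d → Fin 2)) (j : Fin d → Fin 2) :
    (c • u) j = c * u j := rfl

lemma euc_sum_apply {α : Type*} (s : Finset α) (f : α → EuclideanSpace ℂ (Fin d → Fin 2))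
    (j : Fin d → Fin 2) : (∑ a ∈ s, f a) j = ∑ a ∈ s, f a j := by
  induction s using Finset.cons_induction with
  | empty => rfl
  | cons a s ha ih => rw [Finset.sum_cons, Finset.sum_cons, ← ih]; rfl

lemma Phi_smul (c : ℂ) (u : EuclideanSpace ℂ (Fin d → Fin 2)) :
    Phi (c • u) = Polynomial.C c * Phi u := by
  rw [Phi, Phi, Finset.mul_sum]
  exact Finset.sum_congr rfl fun j _ => by rw [euc_smul_apply, map_mul, mul_assoc]

lemma Phi_sum {α : Type*} (s : Finset α) (f : α → EuclideanSpace ℂ (Fin d → Fin 2)) :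
    Phi (∑ a ∈ s, f a) = ∑ a ∈ s, Phi (f a) := by
  rw [Phi]
  simp_rw [euc_sum_apply, map_sum, Finset.sum_mul]
  rw [Finset.sum_comm]
  rfl

lemma Phi_permLin (η : Equiv.Perm (Fin d)) (w : EuclideanSpace ℂ (Fin d → Fin 2)) :
    Phi (permLin ℂ d 2 η w) = Phi w := by
  rw [Phi, Phi]
  refine Fintype.sum_equiv (Equiv.arrowCongr η.symm (Equiv.refl (Fin 2))) _ _ fun j => ?_
  have he : (Equiv.arrowCongr η.symm (Equiv.refl (Fin 2))) j = j ∘ η := rfl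
  have hwt : wt (j ∘ η) = wt j := Equiv.sum_comp η fun i => ((j i : ℕ))
  rw [he, hwt, permLin_apply]

lemma Phi_symmetrize (w : EuclideanSpace ℂ (Fin d → Fin 2)) :
    Phi (symmetrize w) = Phi w := by
  have hfac : ((d.factorial : ℂ)) ≠ 0 := Nat.cast_ne_zero.mpr (Nat.factorial_ne_zero d)
  rw [symmetrize, Phi_smul, Phi_sum]
  rw [Finset.sum_congr rfl fun η _ => Phi_permLin η w]
  rw [Finset.sum_const, Finset.card_univ, Fintype.card_perm, Fintype.card_fin, nsmul_eq_mul,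
    ← Polynomial.C_eq_natCast, ← mul_assoc, ← map_mul, inv_mul_cancel₀ hfac, map_one, one_mul]

lemma permLin_permLin (η τ : Equiv.Perm (Fin d)) (w : EuclideanSpace ℂ (Fin d → Fin 2)) :
    permLin ℂ d 2 η (permLin ℂ d 2 τ w) = permLin ℂ d 2 (η * τ) w := rfl

lemma isSymTensor_symmetrize (w : EuclideanSpace ℂ (Fin d → Fin 2)) :
    IsSymTensor (symmetrize w) := by
  intro η
  rw [symmetrize, map_smul, map_sum]
  congr 1
  refine Fintype.sum_equiv (Equiv.mulLeft η) _ _ fun τ => ?_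
  rw [permLin_permLin]
  rfl

lemma Phi_eTensor (v : Fin d → EuclideanSpace ℂ (Fin 2)) :
    Phi (eTensor v) = ∏ i, (Polynomial.C (v i 0) + Polynomial.C (v i 1) * Polynomial.X) := by
  have h : ∀ i : Fin d, Polynomial.C (v i 0) + Polynomial.C (v i 1) * Polynomial.X
      = ∑ b : Fin 2, Polynomial.C (v i b) * Polynomial.X ^ (b : ℕ) := by
    intro i; rw [Fin.sum_univ_two]; simp
  simp_rw [h]
  rw [Finset.prod_univ_sum, Fintype.piFinset_univ, Phi]
  refine Finset.sum_congr rfl fun j _ => ?_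
  rw [Finset.prod_mul_distrib, ← map_prod, Finset.prod_pow_eq_pow_sum]
  rfl

lemma natDegree_Phi_le (w : EuclideanSpace ℂ (Fin d → Fin 2)) : (Phi w).natDegree ≤ d := by
  rw [Phi]
  exact Polynomial.natDegree_sum_le_of_forall_le _ _ fun j _ =>
    le_trans (Polynomial.natDegree_C_mul_X_pow_le _ _) (wt_le j)


lemma list_prod_fin {M : Type*} [CommMonoid M] (l : List ℂ) (f : ℂ → M) :
    (∏ i : Fin l.length, f (l.get i)) = (l.map f).prod := by
  have h1 : (List.ofFn (f ∘ l.get)).prod = ∏ i : Fin l.length, (f ∘ l.get) i := List.prod_ofFn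
  rw [← List.map_ofFn, List.ofFn_get] at h1
  simpa [Function.comp] using h1.symm

lemma exists_factorization (hd : 0 < d) (P : Polynomial ℂ) (hP : P.natDegree ≤ d) :
    ∃ v : Fin d → EuclideanSpace ℂ (Fin 2),
      (∏ i, (Polynomial.C (v i 0) + Polynomial.C (v i 1) * Polynomial.X)) = P := by
  classical
  set l : List ℂ := P.roots.toList with hl
  have hcard : Multiset.card P.roots = P.natDegree :=
    Polynomial.splits_iff_card_roots.mp (IsAlgClosed.splits P)
  have hlen : l.length = P.natDegree := by rw [hl, Multiset.length_toList, hcard]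
  have hld : l.length ≤ d := hlen ▸ hP
  set s : Fin d → ℂ := fun i => if i = (⟨0, hd⟩ : Fin d) then P.leadingCoeff else 1 with hs
  set w : Fin d → Fin 2 → ℂ := fun i b =>
    if h : (i : ℕ) < l.length then (if b = 0 then -l.get ⟨i, h⟩ else 1)
    else (if b = 0 then 1 else 0) with hwdef
  set G : ℕ → Polynomial ℂ := fun k =>
    if h : k < l.length then Polynomial.X - Polynomial.C (l.get ⟨k, h⟩) else 1 with hG
  refine ⟨fun i => (WithLp.toLp 2 (fun b => s i * w i b) : EuclideanSpace ℂ (Fin 2)), ?_⟩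
  have h1 : (∏ i : Fin d, (Polynomial.C (s i * w i 0) + Polynomial.C (s i * w i 1) * Polynomial.X))
      = (∏ i : Fin d, Polynomial.C (s i))
        * ∏ i : Fin d, (Polynomial.C (w i 0) + Polynomial.C (w i 1) * Polynomial.X) := by
    rw [← Finset.prod_mul_distrib]
    exact Finset.prod_congr rfl fun i _ => by rw [map_mul, map_mul]; ring
  have h2 : (∏ i : Fin d, Polynomial.C (s i)) = Polynomial.C P.leadingCoeff := by
    rw [← map_prod, hs]
    congr 1
    rw [Finset.prod_ite_eq' Finset.univ (⟨0, hd⟩ : Fin d) fun _ => P.leadingCoeff]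
    simp
  have he1 : ∀ i : Fin d, Polynomial.C (w i 0) + Polynomial.C (w i 1) * Polynomial.X
      = G (i : ℕ) := by
    intro i
    by_cases h : (i : ℕ) < l.length
    · simp only [hwdef, hG, dif_pos h]
      norm_num
      ring
    · simp only [hwdef, hG, dif_neg h]
      norm_num
  have h3 : (∏ i : Fin d, (Polynomial.C (w i 0) + Polynomial.C (w i 1) * Polynomial.X))
      = (Multiset.map (fun a => Polynomial.X - Polynomial.C a) P.roots).prod := by
    calc (∏ i : Fin d, (Polynomial.C (w i 0) + Polynomial.C (w i 1) * Polynomial.X))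
        = ∏ k ∈ Finset.range d, G k := by
          rw [← Fin.prod_univ_eq_prod_range]
          exact Finset.prod_congr rfl fun i _ => he1 i
      _ = ∏ k ∈ Finset.range l.length, G k := by
          rw [← Finset.prod_range_mul_prod_Ico G hld]
          have hico : ∀ k ∈ Finset.Ico l.length d, G k = 1 := fun k hk => by
            rw [hG]
            exact dif_neg (by have := (Finset.mem_Ico.mp hk).1; omega)
          rw [Finset.prod_congr rfl hico, Finset.prod_const_one, mul_one]
      _ = ∏ i : Fin l.length, G (i : ℕ) := (Fin.prod_univ_eq_prod_range G l.length).symm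
      _ = ∏ i : Fin l.length, (Polynomial.X - Polynomial.C (l.get i)) := by
          refine Finset.prod_congr rfl fun i _ => ?_
          simp only [hG, dif_pos i.isLt, Fin.eta]
      _ = (l.map fun a => Polynomial.X - Polynomial.C a).prod :=
          list_prod_fin l fun a => Polynomial.X - Polynomial.C a
      _ = (Multiset.map (fun a => Polynomial.X - Polynomial.C a) P.roots).prod := by
          conv_rhs => rw [← Multiset.coe_toList P.roots]
          rw [Multiset.map_coe, Multiset.prod_coe]
  show (∏ i : Fin d, (Polynomial.C (s i * w i 0) + Polynomial.C (s i * w i 1) * Polynomial.X)) = P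
  rw [h1, h2, h3]
  exact Polynomial.C_leadingCoeff_mul_prod_multiset_X_sub_C hcard

end SymC2

open SymC2

/-- Every symmetric tensor in `⊗^d ℂ²` is a single decomposable symmetric
tensor: there are `z₁, …, z_d ∈ ℂ²` with `z = z₁ ∨ ⋯ ∨ z_d`. -/
theorem symmetric_tensor_C2_decomposable
    {d : ℕ} (hd : 0 < d)
    (z : EuclideanSpace ℂ (Fin d → Fin 2)) (hz : IsSymTensor z) :
    ∃ v : Fin d → EuclideanSpace ℂ (Fin 2), z = vee v := by
  classical
  obtain ⟨v, hv⟩ := exists_factorization hd (Phi z) (natDegree_Phi_le z)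
  refine ⟨v, ?_⟩
  have hsym : IsSymTensor (vee v) := isSymTensor_symmetrize _
  have hPhi : Phi (vee v) = Phi z := by
    rw [vee, Phi_symmetrize, Phi_eTensor, hv]
  ext j
  have h2 := coeff_Phi_symm hsym j
  rw [hPhi, coeff_Phi_symm hz j] at h2
  have hch : ((d.choose (wt j) : ℂ)) ≠ 0 := Nat.cast_ne_zero.mpr (Nat.choose_pos (wt_le j)).ne'
  exact (mul_left_cancel₀ hch h2)
end

section
/- Let z ∈ ⊗^d 𝕂ⁿ and let x₁,...,x_d ∈ 𝕂ⁿ be unit vectors maximizing the function (u₁,...,u_d) ↦ |⟨z, u₁∨⋯∨u_d⟩| / HS(u₁∨⋯∨u_d) over unit vectors u₁,...,u_d, and set λ = ⟨z, x₁∨⋯∨x_d⟩ / HS(x₁∨⋯∨x_d)². Then λ x₁∨⋯∨x_d is a best symmetric-decomposable-rank-1 approximation of z in the Hilbert–Schmidt norm: HS(z − λ x₁∨⋯∨x_d) ≤ HS(z − μ u₁∨⋯∨u_d) for all scalars μ and unit vectors u₁,...,u_d. In particular, a best symmetric-decomposable-rank-1 approximation always exists. -/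
open scoped BigOperators

lemma aux_B {𝕜 : Type*} [RCLike 𝕜] {E : Type*} [NormedAddCommGroup E] [InnerProductSpace 𝕜 E] (z v : E) (hv : v ≠ 0) :
    ‖z - ((inner 𝕜 v z : 𝕜) / ((‖v‖ : 𝕜) ^ 2)) • v‖ ^ 2
      = ‖z‖ ^ 2 - (‖(inner 𝕜 v z : 𝕜)‖ / ‖v‖) ^ 2 := by
  set c : 𝕜 := (inner 𝕜 v z : 𝕜) / ((‖v‖ : 𝕜) ^ 2) with hc
  have hvn : (‖v‖ : ℝ) ≠ 0 := norm_ne_zero_iff.mpr hv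
  have hvK : ((‖v‖ : 𝕜) ^ 2) ≠ 0 :=
    pow_ne_zero 2 (RCLike.ofReal_ne_zero.mpr hvn)
  have horth : (inner 𝕜 (z - c • v) v : 𝕜) = 0 := by
    rw [inner_sub_left, inner_smul_left, inner_self_eq_norm_sq_to_K]
    have hcc : (starRingEnd 𝕜) c = (inner 𝕜 z v : 𝕜) / ((‖v‖ : 𝕜) ^ 2) := by
      rw [hc, map_div₀, inner_conj_symm, map_pow, RCLike.conj_ofReal]
    rw [hcc]
    field_simp
    rw [div_self (RCLike.ofReal_ne_zero.mpr hvn), sub_self, mul_zero]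
  have hdec : ‖z‖ ^ 2 = ‖z - c • v‖ ^ 2 + ‖c • v‖ ^ 2 := by
    have hz : z = (z - c • v) + c • v := by abel
    have hre : RCLike.re (inner 𝕜 (z - c • v) (c • v) : 𝕜) = 0 := by
      rw [inner_smul_right, horth, mul_zero, map_zero]
    calc ‖z‖ ^ 2 = ‖(z - c • v) + c • v‖ ^ 2 := by rw [← hz]
      _ = ‖z - c • v‖ ^ 2 + 2 * RCLike.re (inner 𝕜 (z - c • v) (c • v) : 𝕜) + ‖c • v‖ ^ 2 :=
        norm_add_sq _ _
      _ = ‖z - c • v‖ ^ 2 + ‖c • v‖ ^ 2 := by rw [hre]; ring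
  have hnc : ‖c • v‖ ^ 2 = (‖(inner 𝕜 v z : 𝕜)‖ / ‖v‖) ^ 2 := by
    rw [norm_smul, hc, norm_div]
    have : ‖((‖v‖ : 𝕜) ^ 2)‖ = ‖v‖ ^ 2 := by
      rw [norm_pow, RCLike.norm_ofReal, abs_norm]
    rw [this]
    field_simp
  rw [hdec, hnc]; ring

lemma aux_A {𝕜 : Type*} [RCLike 𝕜] {E : Type*} [NormedAddCommGroup E] [InnerProductSpace 𝕜 E] (z v : E) (μ : 𝕜) :
    ‖z‖ ^ 2 - (‖(inner 𝕜 v z : 𝕜)‖ / ‖v‖) ^ 2 ≤ ‖z - μ • v‖ ^ 2 := by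
  rcases eq_or_ne v 0 with rfl | hv
  · simp
  set c : 𝕜 := (inner 𝕜 v z : 𝕜) / ((‖v‖ : 𝕜) ^ 2) with hc
  have hvn : (‖v‖ : ℝ) ≠ 0 := norm_ne_zero_iff.mpr hv
  have hvK : ((‖v‖ : 𝕜) ^ 2) ≠ 0 :=
    pow_ne_zero 2 (RCLike.ofReal_ne_zero.mpr hvn)
  have horth : (inner 𝕜 (z - c • v) v : 𝕜) = 0 := by
    rw [inner_sub_left, inner_smul_left, inner_self_eq_norm_sq_to_K]
    have hcc : (starRingEnd 𝕜) c = (inner 𝕜 z v : 𝕜) / ((‖v‖ : 𝕜) ^ 2) := by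
      rw [hc, map_div₀, inner_conj_symm, map_pow, RCLike.conj_ofReal]
    rw [hcc]
    field_simp
    rw [div_self (RCLike.ofReal_ne_zero.mpr hvn), sub_self, mul_zero]
  have hsplit : z - μ • v = (z - c • v) + (c - μ) • v := by
    rw [sub_smul]; abel
  have hre : RCLike.re (inner 𝕜 (z - c • v) ((c - μ) • v) : 𝕜) = 0 := by
    rw [inner_smul_right, horth, mul_zero, map_zero]
  have hB := aux_B (𝕜 := 𝕜) z v hv
  rw [← hc] at hB
  have : ‖z - μ • v‖ ^ 2 = ‖z - c • v‖ ^ 2 + ‖(c - μ) • v‖ ^ 2 := by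
    rw [hsplit, norm_add_sq (𝕜 := 𝕜), hre]; ring
  nlinarith [sq_nonneg ‖(c - μ) • v‖]

lemma permLin_ofLp {𝕜 : Type*} [RCLike 𝕜] {d n : ℕ} (η : Equiv.Perm (Fin d))
    (z : EuclideanSpace 𝕜 (Fin d → Fin n)) (j : Fin d → Fin n) :
    (permLin 𝕜 d n η z) j = z (j ∘ η) := rfl

lemma eTensor_ofLp {𝕜 : Type*} [RCLike 𝕜] {d n : ℕ}
    (x : Fin d → EuclideanSpace 𝕜 (Fin n)) (j : Fin d → Fin n) :
    (eTensor x) j = ∏ i, x i (j i) := rfl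

lemma inner_vee_const {𝕜 : Type*} [RCLike 𝕜] {d n : ℕ}
    (x : Fin d → EuclideanSpace 𝕜 (Fin n)) (t : EuclideanSpace 𝕜 (Fin n)) :
    (inner 𝕜 (vee x) (eTensor (fun _ : Fin d => t)) : 𝕜) = ∏ i, (inner 𝕜 (x i) t : 𝕜) := by
  classical
  have hstep : ∀ η : Equiv.Perm (Fin d),
      (inner 𝕜 (permLin 𝕜 d n η (eTensor x)) (eTensor (fun _ : Fin d => t)) : 𝕜)
        = ∏ i, (inner 𝕜 (x i) t : 𝕜) := by
    intro η
    have h1 : (inner 𝕜 (permLin 𝕜 d n η (eTensor x)) (eTensor (fun _ : Fin d => t)) : 𝕜)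
        = ∑ j : Fin d → Fin n, ∏ i, ((starRingEnd 𝕜) (x (η.symm i) (j i)) * t (j i)) := by
      rw [PiLp.inner_apply]
      refine Finset.sum_congr rfl fun j _ => ?_
      simp only [RCLike.inner_apply, permLin_ofLp, eTensor_ofLp]
      rw [mul_comm]
      rw [map_prod]
      have h2 : ∏ i, (starRingEnd 𝕜) (x i ((j ∘ η) i))
          = ∏ i, (starRingEnd 𝕜) (x (η.symm i) (j i)) := by
        rw [← Equiv.prod_comp η (fun i => (starRingEnd 𝕜) (x (η.symm i) (j i)))]
        simp [Function.comp]
      rw [h2, Finset.prod_mul_distrib]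
    rw [h1, ← Fintype.prod_sum (fun (i : Fin d) (k : Fin n) =>
      (starRingEnd 𝕜) (x (η.symm i) k) * t k)]
    have h4 : ∀ i : Fin d, ∑ k, (starRingEnd 𝕜) (x (η.symm i) k) * t k
        = (inner 𝕜 (x (η.symm i)) t : 𝕜) := by
      intro i
      rw [PiLp.inner_apply]
      simp [RCLike.inner_apply, mul_comm]
    rw [Finset.prod_congr rfl fun i _ => h4 i]
    exact Equiv.prod_comp η.symm (fun i => (inner 𝕜 (x i) t : 𝕜))
  have hd : ((d.factorial : 𝕜)) ≠ 0 := Nat.cast_ne_zero.mpr (Nat.factorial_ne_zero d)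
  show (inner 𝕜 (symmetrize (eTensor x)) (eTensor (fun _ : Fin d => t)) : 𝕜) = _
  rw [symmetrize, inner_smul_left, sum_inner]
  rw [Finset.sum_congr rfl fun η _ => hstep η, Finset.sum_const,
    Finset.card_univ, Fintype.card_perm, Fintype.card_fin]
  rw [map_inv₀, map_natCast (starRingEnd 𝕜)]
  rw [nsmul_eq_mul]
  field_simp

lemma vee_ne_zero {𝕜 : Type*} [RCLike 𝕜] {d n : ℕ}
    (x : Fin d → EuclideanSpace 𝕜 (Fin n)) (hx : ∀ i, x i ≠ 0) : vee x ≠ 0 := by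
  classical
  intro h
  set p : MvPolynomial (Fin n) 𝕜 :=
    ∏ i, ∑ k, MvPolynomial.C ((starRingEnd 𝕜) (x i k)) * MvPolynomial.X k with hp
  have hpne : p ≠ 0 := by
    rw [hp, Finset.prod_ne_zero_iff]
    intro i _ hzero
    obtain ⟨k, hk⟩ : ∃ k, x i k ≠ 0 := by
      by_contra hall
      push_neg at hall
      exact hx i (PiLp.ext fun k => by simpa using hall k)
    have := congrArg (MvPolynomial.eval (Pi.single k (1 : 𝕜))) hzero
    simp [MvPolynomial.eval_sum, Pi.single_apply, mul_ite] at this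
    exact hk this
  obtain ⟨t, ht⟩ : ∃ t : Fin n → 𝕜, MvPolynomial.eval t p ≠ 0 := by
    by_contra hall
    push_neg at hall
    exact hpne (MvPolynomial.funext fun t => by simp [hall t])
  apply ht
  have hev : MvPolynomial.eval t p = ∏ i, (inner 𝕜 (x i) (WithLp.toLp 2 t) : 𝕜) := by
    rw [hp, map_prod]
    refine Finset.prod_congr rfl fun i _ => ?_
    rw [map_sum, PiLp.inner_apply]
    simp [RCLike.inner_apply, mul_comm]
  rw [hev, ← inner_vee_const x (WithLp.toLp 2 t), h, inner_zero_left]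

/-- If unit vectors `x₁,…,x_d` maximize
`(u₁,…,u_d) ↦ |⟨z, u₁∨⋯∨u_d⟩| / HS(u₁∨⋯∨u_d)` over unit vectors and
`λ = ⟨z, x₁∨⋯∨x_d⟩ / HS(x₁∨⋯∨x_d)²`, then `λ x₁∨⋯∨x_d` is a best symmetric-decomposable-rank-1
approximation of `z` in the Hilbert–Schmidt norm; in particular such a best approximation
always exists. -/
theorem best_symmetric_decomposable_rank_one_approximation
    {𝕜 : Type*} [RCLike 𝕜] {d n : ℕ} (hn : 0 < n)
    (z : EuclideanSpace 𝕜 (Fin d → Fin n))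
    (x : Fin d → EuclideanSpace 𝕜 (Fin n)) (hx : ∀ i, ‖x i‖ = 1)
    (hmax : ∀ u : Fin d → EuclideanSpace 𝕜 (Fin n), (∀ i, ‖u i‖ = 1) →
      ‖(inner 𝕜 (vee u) z : 𝕜)‖ / ‖vee u‖ ≤ ‖(inner 𝕜 (vee x) z : 𝕜)‖ / ‖vee x‖) :
    (∀ (μ : 𝕜) (u : Fin d → EuclideanSpace 𝕜 (Fin n)), (∀ i, ‖u i‖ = 1) →
        ‖z - ((inner 𝕜 (vee x) z : 𝕜) / ((‖vee x‖ : 𝕜) ^ 2)) • vee x‖ ≤ ‖z - μ • vee u‖) ∧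
    (∃ (v : Fin d → EuclideanSpace 𝕜 (Fin n)) (c : 𝕜), (∀ i, ‖v i‖ = 1) ∧
        ∀ (μ : 𝕜) (u : Fin d → EuclideanSpace 𝕜 (Fin n)), (∀ i, ‖u i‖ = 1) →
          ‖z - c • vee v‖ ≤ ‖z - μ • vee u‖) := by
  have hxne : ∀ i, x i ≠ 0 := by
    intro i h0
    have := hx i
    rw [h0, norm_zero] at this
    exact one_ne_zero this.symm
  have hvx : vee x ≠ 0 := vee_ne_zero x hxne
  have key : ∀ (μ : 𝕜) (u : Fin d → EuclideanSpace 𝕜 (Fin n)), (∀ i, ‖u i‖ = 1) →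
      ‖z - ((inner 𝕜 (vee x) z : 𝕜) / ((‖vee x‖ : 𝕜) ^ 2)) • vee x‖ ≤ ‖z - μ • vee u‖ := by
    intro μ u hu
    have hune : ∀ i, u i ≠ 0 := by
      intro i h0
      have := hu i
      rw [h0, norm_zero] at this
      exact one_ne_zero this.symm
    have hvu : vee u ≠ 0 := vee_ne_zero u hune
    have hB := aux_B (𝕜 := 𝕜) z (vee x) hvx
    have hA := aux_A (𝕜 := 𝕜) z (vee u) μ
    have hm := hmax u hu
    have h0u : 0 ≤ ‖(inner 𝕜 (vee u) z : 𝕜)‖ / ‖vee u‖ :=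
      div_nonneg (norm_nonneg _) (norm_nonneg _)
    nlinarith [norm_nonneg (z - ((inner 𝕜 (vee x) z : 𝕜) / ((‖vee x‖ : 𝕜) ^ 2)) • vee x),
      norm_nonneg (z - μ • vee u)]
  exact ⟨key, x, (inner 𝕜 (vee x) z : 𝕜) / ((‖vee x‖ : 𝕜) ^ 2), hx, key⟩
end

section
/- Let z ∈ ℂ² ⊗ ℂ² be the symmetric tensor z = e₁ ⊗ e₁ + e₂ ⊗ e₂, where e₁, e₂ is the canonical basis. Then the non-symmetric elementary tensor x = (1/√2, i/√2) ⊗ (1/√2, −i/√2) satisfies ⟨z, x⟩ = |⟨z, x⟩| = ε(z), where ε(z) = sup{|⟨y₁ ⊗ y₂, z⟩| : ‖y₁‖ = ‖y₂‖ = 1} is the injective norm; hence x is a best rank-1 approximation of z in the Hilbert–Schmidt norm and is not symmetric. -/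
open scoped BigOperators

section Aux
open scoped ComplexConjugate

open scoped BigOperators ComplexConjugate

lemma sum_fn2 {M : Type*} [AddCommMonoid M] (f : (Fin 2 → Fin 2) → M) :
    ∑ j, f j = f ![0,0] + f ![0,1] + f ![1,0] + f ![1,1] := by
  rw [← (piFinTwoEquiv fun _ => Fin 2).symm.sum_comp f]
  simp only [Fintype.sum_prod_type, Fin.sum_univ_two, piFinTwoEquiv, Equiv.coe_fn_symm_mk]
  have h : ∀ a b : Fin 2, (Fin.cons a (Fin.cons b finZeroElim) : Fin 2 → Fin 2) = ![a,b] := by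
    intro a b; funext i; fin_cases i <;> rfl
  rw [h, h, h, h]; abel

lemma eT2 (y : Fin 2 → EuclideanSpace ℂ (Fin 2)) (j : Fin 2 → Fin 2) :
    eTensor y j = y 0 (j 0) * y 1 (j 1) := by
  simp [eTensor, Fin.prod_univ_two]

lemma inner22 (p q : EuclideanSpace ℂ (Fin 2 → Fin 2)) :
    (inner ℂ p q : ℂ) = ∑ j : Fin 2 → Fin 2, conj (p j) * q j := by
  simp [PiLp.inner_apply, RCLike.inner_apply, mul_comm]

lemma innerCS (a b : EuclideanSpace ℂ (Fin 2)) :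
    ‖a 0 * b 0 + a 1 * b 1‖ ≤ ‖a‖ * ‖b‖ := by
  set u : EuclideanSpace ℂ (Fin 2) := WithLp.toLp 2 ![conj (a 0), conj (a 1)] with hu
  have h1 : (inner ℂ u b : ℂ) = a 0 * b 0 + a 1 * b 1 := by
    simp [PiLp.inner_apply, RCLike.inner_apply, Fin.sum_univ_two, hu, mul_comm]
  have h2 : ‖u‖ = ‖a‖ := by
    rw [EuclideanSpace.norm_eq, EuclideanSpace.norm_eq]
    simp [Fin.sum_univ_two, hu]
  calc ‖a 0 * b 0 + a 1 * b 1‖ = ‖(inner ℂ u b : ℂ)‖ := by rw [h1]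
    _ ≤ ‖u‖ * ‖b‖ := norm_inner_le_norm u b
    _ = ‖a‖ * ‖b‖ := by rw [h2]

lemma norm_eT2 (y : Fin 2 → EuclideanSpace ℂ (Fin 2)) :
    ‖eTensor y‖ = ‖y 0‖ * ‖y 1‖ := by
  rw [EuclideanSpace.norm_eq, EuclideanSpace.norm_eq, EuclideanSpace.norm_eq,
    ← Real.sqrt_mul (by positivity)]
  congr 1
  rw [sum_fn2 (fun j => ‖eTensor y j‖ ^ 2)]
  simp only [eT2, norm_mul, mul_pow, Fin.sum_univ_two, Matrix.cons_val_zero,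
    Matrix.cons_val_one, Matrix.head_cons]
  ring

open Complex

noncomputable def e : Fin 2 → EuclideanSpace ℂ (Fin 2) := fun i => EuclideanSpace.single i 1
noncomputable def z : EuclideanSpace ℂ (Fin 2 → Fin 2) := eTensor ![e 0, e 0] + eTensor ![e 1, e 1]
noncomputable def v : EuclideanSpace ℂ (Fin 2) := WithLp.toLp 2 ![(1 / Real.sqrt 2 : ℂ), Complex.I / Real.sqrt 2]
noncomputable def w : EuclideanSpace ℂ (Fin 2) := WithLp.toLp 2 ![(1 / Real.sqrt 2 : ℂ), -Complex.I / Real.sqrt 2]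

lemma z_apply (j : Fin 2 → Fin 2) :
    z j = (if j 0 = 0 then 1 else 0) * (if j 1 = 0 then 1 else 0)
        + (if j 0 = 1 then 1 else 0) * (if j 1 = 1 then 1 else 0) := by
  show eTensor ![e 0, e 0] j + eTensor ![e 1, e 1] j = _
  rw [eT2, eT2]
  simp [e, EuclideanSpace.single_apply]

lemma inner_z_eT (y : Fin 2 → EuclideanSpace ℂ (Fin 2)) :
    (inner ℂ z (eTensor y) : ℂ) = y 0 0 * y 1 0 + y 0 1 * y 1 1 := by
  rw [inner22, sum_fn2 (fun j => conj (z j) * eTensor y j)]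
  simp only [z_apply, eT2, Matrix.cons_val_zero, Matrix.cons_val_one, Matrix.head_cons]
  norm_num

lemma inner_eT_z (y : Fin 2 → EuclideanSpace ℂ (Fin 2)) :
    (inner ℂ (eTensor y) z : ℂ) = conj (y 0 0 * y 1 0 + y 0 1 * y 1 1) := by
  rw [← inner_conj_symm, inner_z_eT]

lemma sqrt2_sq : (Real.sqrt 2 : ℂ) * (Real.sqrt 2 : ℂ) = 2 := by
  norm_cast
  rw [Real.mul_self_sqrt (by norm_num)]

lemma sqrt2_ne : (Real.sqrt 2 : ℂ) ≠ 0 := by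
  intro h
  have := sqrt2_sq
  rw [h] at this
  norm_num at this

lemma key_val : (1 / (Real.sqrt 2 : ℂ)) * (1 / (Real.sqrt 2 : ℂ)) +
    (Complex.I / Real.sqrt 2) * (-Complex.I / Real.sqrt 2) = 1 := by
  have h := sqrt2_sq
  field_simp
  rw [sq (Real.sqrt 2 : ℂ), h, Complex.I_sq]
  ring_nf

lemma inner_x_z : (inner ℂ (eTensor ![v, w]) z : ℂ) = 1 := by
  rw [inner_eT_z]
  simp only [Matrix.cons_val_zero, Matrix.cons_val_one, Matrix.head_cons, v, w]
  rw [key_val]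
  exact map_one (starRingEnd ℂ)

lemma norm_aux1 : ‖(1 / (Real.sqrt 2:ℝ) : ℂ)‖ = 1 / Real.sqrt 2 := by
  rw [norm_div, norm_one, Complex.norm_real, Real.norm_eq_abs, _root_.abs_of_nonneg (Real.sqrt_nonneg 2)]

lemma norm_aux2 : ‖(Complex.I / (Real.sqrt 2:ℝ) : ℂ)‖ = 1 / Real.sqrt 2 := by
  rw [norm_div, Complex.norm_I, Complex.norm_real, Real.norm_eq_abs, _root_.abs_of_nonneg (Real.sqrt_nonneg 2)]

lemma norm_aux3 : ‖(-Complex.I / (Real.sqrt 2:ℝ) : ℂ)‖ = 1 / Real.sqrt 2 := by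
  rw [norm_div, norm_neg, Complex.norm_I, Complex.norm_real, Real.norm_eq_abs, _root_.abs_of_nonneg (Real.sqrt_nonneg 2)]

lemma norm_v : ‖v‖ = 1 := by
  rw [EuclideanSpace.norm_eq]
  simp only [Fin.sum_univ_two, v, Matrix.cons_val_zero, Matrix.cons_val_one, Matrix.head_cons]
  rw [norm_aux1, norm_aux2, div_pow, one_pow, Real.sq_sqrt (by norm_num : (0:ℝ) ≤ 2)]
  norm_num

lemma norm_w : ‖w‖ = 1 := by
  rw [EuclideanSpace.norm_eq]
  simp only [Fin.sum_univ_two, w, Matrix.cons_val_zero, Matrix.cons_val_one, Matrix.head_cons]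
  rw [norm_aux1, norm_aux3, div_pow, one_pow, Real.sq_sqrt (by norm_num : (0:ℝ) ≤ 2)]
  norm_num

lemma norm_z_sq : ‖z‖ ^ 2 = 2 := by
  have h1 : (inner ℂ z z : ℂ) = 2 := by
    rw [inner22, sum_fn2 (fun j => conj (z j) * z j)]
    simp only [z_apply]
    norm_num
  rw [← @inner_self_eq_norm_sq ℂ _ _ _ _ z, h1]
  norm_num

lemma norm_inner_le (y : Fin 2 → EuclideanSpace ℂ (Fin 2)) (hy : ∀ i, ‖y i‖ = 1) :
    ‖(inner ℂ (eTensor y) z : ℂ)‖ ≤ 1 := by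
  rw [inner_eT_z, RCLike.norm_conj]
  calc ‖y 0 0 * y 1 0 + y 0 1 * y 1 1‖ ≤ ‖y 0‖ * ‖y 1‖ := innerCS (y 0) (y 1)
    _ = 1 := by rw [hy 0, hy 1, one_mul]

lemma vw_unit : ∀ i, ‖(![v, w] : Fin 2 → EuclideanSpace ℂ (Fin 2)) i‖ = 1 := by
  intro i
  fin_cases i
  · simpa using norm_v
  · simpa using norm_w

lemma mem_S : (1:ℝ) ∈ {c : ℝ | ∃ y : Fin 2 → EuclideanSpace ℂ (Fin 2),
    (∀ i, ‖y i‖ = 1) ∧ c = ‖(inner ℂ (eTensor y) z : ℂ)‖} :=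
  ⟨![v, w], vw_unit, by rw [inner_x_z, norm_one]⟩

lemma injNorm_z : injNorm z = 1 := by
  unfold injNorm
  apply le_antisymm
  · exact csSup_le ⟨1, mem_S⟩ (by rintro c ⟨y, hy, rfl⟩; exact norm_inner_le y hy)
  · exact le_csSup ⟨1, by rintro c ⟨y, hy, rfl⟩; exact norm_inner_le y hy⟩ mem_S

lemma norm_x : ‖eTensor ![v, w]‖ = 1 := by
  rw [norm_eT2]
  simp only [Matrix.cons_val_zero, Matrix.cons_val_one, Matrix.head_cons]
  rw [norm_v, norm_w, one_mul]

lemma re_inner_z_x : Complex.re (inner ℂ z (eTensor ![v, w]) : ℂ) = 1 := by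
  have : (inner ℂ z (eTensor ![v, w]) : ℂ) = 1 := by
    rw [← inner_conj_symm, inner_x_z]; simp
  rw [this]; simp

lemma best (u : Fin 2 → EuclideanSpace ℂ (Fin 2)) :
    ‖z - eTensor ![v, w]‖ ≤ ‖z - eTensor u‖ := by
  have hx : ‖z - eTensor ![v, w]‖ ^ 2 = 1 := by
    rw [norm_sub_sq (𝕜 := ℂ), norm_z_sq, norm_x]
    rw [show (RCLike.re (inner ℂ z (eTensor ![v,w]) : ℂ)) = 1 from re_inner_z_x]
    norm_num
  have h1 : Complex.re (inner ℂ z (eTensor u) : ℂ) ≤ ‖u 0‖ * ‖u 1‖ := by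
    calc Complex.re (inner ℂ z (eTensor u) : ℂ) ≤ ‖(inner ℂ z (eTensor u) : ℂ)‖ :=
          Complex.re_le_norm _
      _ ≤ ‖u 0‖ * ‖u 1‖ := by rw [inner_z_eT]; exact innerCS (u 0) (u 1)
  have h2 : ‖z - eTensor u‖ ^ 2 = 2 - 2 * Complex.re (inner ℂ z (eTensor u) : ℂ)
      + (‖u 0‖ * ‖u 1‖) ^ 2 := by
    rw [norm_sub_sq (𝕜 := ℂ), norm_z_sq, norm_eT2]
    rfl
  have hA : 1 ≤ ‖z - eTensor u‖ ^ 2 := by nlinarith [sq_nonneg (‖u 0‖ * ‖u 1‖ - 1)]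
  have hB : ‖z - eTensor ![v, w]‖ = 1 := by
    rw [← Real.sqrt_sq (norm_nonneg (z - eTensor ![v, w])), hx, Real.sqrt_one]
  nlinarith [norm_nonneg (z - eTensor u)]

lemma not_sym : ¬ IsSymTensor (eTensor ![v, w]) := by
  intro h
  have h1 : eTensor ![v, w] ((![0,1] : Fin 2 → Fin 2) ∘ (Equiv.swap (0:Fin 2) 1))
      = eTensor ![v, w] ![0,1] := congrFun (congrArg WithLp.ofLp (h (Equiv.swap 0 1))) ![0,1]
  have hc : ((![0,1] : Fin 2 → Fin 2) ∘ (Equiv.swap (0:Fin 2) 1)) = ![1,0] := by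
    funext i; fin_cases i <;> simp [Equiv.swap_apply_left, Equiv.swap_apply_right]
  rw [hc, eT2, eT2] at h1
  simp only [Matrix.cons_val_zero, Matrix.cons_val_one, Matrix.head_cons, v, w] at h1
  -- h1 : I/√2 * (1/√2) = 1/√2 * (-I/√2)
  have hI : Complex.I = -Complex.I := by
    field_simp at h1
    linear_combination Complex.I * h1
  have : Complex.I = 0 := by linear_combination hI / 2
  exact Complex.I_ne_zero this


end Aux

/-- For the symmetric tensor `z = e₁⊗e₁ + e₂⊗e₂ ∈ ℂ²⊗ℂ²`, the non-symmetric
elementary tensor `x = (1/√2, i/√2) ⊗ (1/√2, −i/√2)` satisfies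
`⟨z,x⟩ = |⟨z,x⟩| = ε(z)`; hence `x` is a best rank-1 approximation of `z` in the
Hilbert–Schmidt norm and is not symmetric. -/
theorem nonsymmetric_best_rank_one_example :
    letI e : Fin 2 → EuclideanSpace ℂ (Fin 2) := fun i => EuclideanSpace.single i 1
    letI z : EuclideanSpace ℂ (Fin 2 → Fin 2) := eTensor ![e 0, e 0] + eTensor ![e 1, e 1]
    letI v : EuclideanSpace ℂ (Fin 2) :=
      WithLp.toLp 2 ![(1 / Real.sqrt 2 : ℂ), Complex.I / Real.sqrt 2]
    letI w : EuclideanSpace ℂ (Fin 2) :=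
      WithLp.toLp 2 ![(1 / Real.sqrt 2 : ℂ), -Complex.I / Real.sqrt 2]
    letI x : EuclideanSpace ℂ (Fin 2 → Fin 2) := eTensor ![v, w]
    (inner ℂ x z : ℂ) = (‖(inner ℂ x z : ℂ)‖ : ℂ) ∧
    ‖(inner ℂ x z : ℂ)‖ = injNorm z ∧
    (∀ u : Fin 2 → EuclideanSpace ℂ (Fin 2), ‖z - x‖ ≤ ‖z - eTensor u‖) ∧
    ¬ IsSymTensor x := by
  refine ⟨?_, ?_, ?_, ?_⟩
  · show (inner ℂ (eTensor ![v, w]) z : ℂ) = (‖(inner ℂ (eTensor ![v, w]) z : ℂ)‖ : ℂ)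
    rw [inner_x_z]
    norm_num
  · show ‖(inner ℂ (eTensor ![v, w]) z : ℂ)‖ = injNorm z
    rw [inner_x_z, norm_one, injNorm_z]
  · exact best
  · exact not_sym
end

section
/- Let z ∈ ⊗^d 𝕂ⁿ be a symmetric tensor with a representation z = Σ_{i=1}^r z₁ⁱ ⊗ ⋯ ⊗ z_dⁱ. Then π(z) = Σ_{i=1}^r ‖z₁ⁱ‖⋯‖z_dⁱ‖ holds if and only if there exists a symmetric d-linear form L on 𝕂ⁿ of norm one such that L(z₁ⁱ, ..., z_dⁱ) = ‖z₁ⁱ‖⋯‖z_dⁱ‖ for every i = 1, ..., r. -/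
open scoped BigOperators

section Helpers
set_option linter.unusedSectionVars false

variable {𝕜 : Type*} [RCLike 𝕜] {d n : ℕ}

private lemma eTensor_apply (x : Fin d → EuclideanSpace 𝕜 (Fin n)) (j : Fin d → Fin n) :
    eTensor x j = ∏ i, x i (j i) := rfl

private lemma comp_update_eq [DecidableEq (Fin d)] (x : Fin d → EuclideanSpace 𝕜 (Fin n))
    (p : Fin d) (y : EuclideanSpace 𝕜 (Fin n)) (j : Fin d → Fin n) :
    (fun i => Function.update x p y i (j i)) =
      Function.update (fun i => x i (j i)) p (y (j p)) := by
  funext i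
  rcases eq_or_ne i p with h | h
  · subst h; simp
  · simp [Function.update_apply, h]

private lemma eTensor_update [DecidableEq (Fin d)] (x : Fin d → EuclideanSpace 𝕜 (Fin n))
    (p : Fin d) (y : EuclideanSpace 𝕜 (Fin n)) (j : Fin d → Fin n) :
    eTensor (Function.update x p y) j = y (j p) * ∏ i ∈ Finset.univ \ {p}, x i (j i) := by
  rw [eTensor_apply]
  calc ∏ i, Function.update x p y i (j i)
      = ∏ i, Function.update (fun i => x i (j i)) p (y (j p)) i := by
        rw [comp_update_eq]
    _ = y (j p) * ∏ i ∈ Finset.univ \ {p}, x i (j i) :=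
        Finset.prod_update_of_mem (Finset.mem_univ p) _ _

private lemma eTensor_self_eq [DecidableEq (Fin d)] (x : Fin d → EuclideanSpace 𝕜 (Fin n))
    (p : Fin d) (j : Fin d → Fin n) :
    eTensor x j = x p (j p) * ∏ i ∈ Finset.univ \ {p}, x i (j i) := by
  conv_lhs => rw [show x = Function.update x p (x p) from (Function.update_eq_self p x).symm]
  rw [eTensor_update]

private lemma eTensor_update_add [DecidableEq (Fin d)] (x : Fin d → EuclideanSpace 𝕜 (Fin n))
    (p : Fin d) (a b : EuclideanSpace 𝕜 (Fin n)) :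
    eTensor (Function.update x p (a + b)) =
      eTensor (Function.update x p a) + eTensor (Function.update x p b) := by
  ext j
  show eTensor (Function.update x p (a + b)) j
      = eTensor (Function.update x p a) j + eTensor (Function.update x p b) j
  rw [eTensor_update, eTensor_update, eTensor_update]
  show (a (j p) + b (j p)) * _ = _
  ring

private lemma eTensor_update_smul [DecidableEq (Fin d)] (x : Fin d → EuclideanSpace 𝕜 (Fin n))
    (p : Fin d) (c : 𝕜) (a : EuclideanSpace 𝕜 (Fin n)) :
    eTensor (Function.update x p (c • a)) = c • eTensor (Function.update x p a) := by
  ext j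
  show eTensor (Function.update x p (c • a)) j = c * eTensor (Function.update x p a) j
  rw [eTensor_update, eTensor_update]
  show (c * a (j p)) * _ = _
  ring

private lemma eTensor_smul_self [DecidableEq (Fin d)] (x : Fin d → EuclideanSpace 𝕜 (Fin n))
    (p : Fin d) (c : 𝕜) :
    eTensor (Function.update x p (c • x p)) = c • eTensor x := by
  rw [eTensor_update_smul, Function.update_eq_self]

private lemma eTensor_eq_zero (x : Fin d → EuclideanSpace 𝕜 (Fin n)) (i₀ : Fin d)
    (h : x i₀ = 0) : eTensor x = 0 := by
  ext j
  show (∏ i, x i (j i)) = 0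
  exact Finset.prod_eq_zero (Finset.mem_univ i₀) (by rw [h]; rfl)

private lemma prod_norm_update [DecidableEq (Fin d)] (x : Fin d → EuclideanSpace 𝕜 (Fin n))
    (p : Fin d) (y : EuclideanSpace 𝕜 (Fin n)) :
    ∏ j, ‖Function.update x p y j‖ = ‖y‖ * ∏ j ∈ Finset.univ \ {p}, ‖x j‖ := by
  calc ∏ j, ‖Function.update x p y j‖
      = ∏ j, Function.update (fun j => ‖x j‖) p ‖y‖ j := by
        apply Finset.prod_congr rfl
        intro i _
        rcases eq_or_ne i p with h | h
        · subst h; simp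
        · simp [Function.update_apply, h]
    _ = ‖y‖ * ∏ j ∈ Finset.univ \ {p}, ‖x j‖ :=
        Finset.prod_update_of_mem (Finset.mem_univ p) _ _

private lemma coord_norm_le (x : EuclideanSpace 𝕜 (Fin n)) (t : Fin n) : ‖x t‖ ≤ ‖x‖ := by
  have h1 : ‖x t‖ = ‖(inner 𝕜 (EuclideanSpace.single t (1:𝕜)) x : 𝕜)‖ := by
    rw [EuclideanSpace.inner_single_left]; simp
  rw [h1]
  calc ‖(inner 𝕜 (EuclideanSpace.single t (1:𝕜)) x : 𝕜)‖
      ≤ ‖EuclideanSpace.single t (1:𝕜)‖ * ‖x‖ := norm_inner_le_norm _ _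
    _ = ‖x‖ := by rw [EuclideanSpace.norm_single]; simp

end Helpers
section PN
set_option linter.unusedSectionVars false

variable {𝕜 : Type*} [RCLike 𝕜] {d n : ℕ}

private def repCosts (z : EuclideanSpace 𝕜 (Fin d → Fin n)) : Set ℝ :=
  {c : ℝ | ∃ (r : ℕ) (v : Fin r → Fin d → EuclideanSpace 𝕜 (Fin n)),
    z = ∑ i, eTensor (v i) ∧ c = ∑ i, ∏ j, ‖v i j‖}

private lemma projNorm_eq (z : EuclideanSpace 𝕜 (Fin d → Fin n)) :
    projNorm z = sInf (repCosts z) := rfl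

private lemma repCosts_nonneg {z : EuclideanSpace 𝕜 (Fin d → Fin n)} {c : ℝ}
    (hc : c ∈ repCosts z) : 0 ≤ c := by
  obtain ⟨r, w, -, rfl⟩ := hc
  exact Finset.sum_nonneg fun i _ => Finset.prod_nonneg fun j _ => norm_nonneg _

private lemma repCosts_bddBelow (z : EuclideanSpace 𝕜 (Fin d → Fin n)) :
    BddBelow (repCosts z) := ⟨0, fun c hc => repCosts_nonneg hc⟩

private lemma mem_repCosts {z : EuclideanSpace 𝕜 (Fin d → Fin n)} (r : ℕ)
    (v : Fin r → Fin d → EuclideanSpace 𝕜 (Fin n)) (h : z = ∑ i, eTensor (v i)) :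
    (∑ i, ∏ j, ‖v i j‖) ∈ repCosts z := ⟨r, v, h, rfl⟩

private lemma pn_le {z : EuclideanSpace 𝕜 (Fin d → Fin n)} {c : ℝ}
    (hc : c ∈ repCosts z) : projNorm z ≤ c :=
  csInf_le (repCosts_bddBelow z) hc

private lemma pn_nonneg (z : EuclideanSpace 𝕜 (Fin d → Fin n)) : 0 ≤ projNorm z :=
  Real.sInf_nonneg fun _ hc => repCosts_nonneg hc

private lemma projNorm_zero : projNorm (0 : EuclideanSpace 𝕜 (Fin d → Fin n)) = 0 := by
  refine le_antisymm (pn_le ⟨0, fun i => i.elim0, by simp, by simp⟩) (pn_nonneg 0)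

/-- canonical representation -/
private lemma canonRep (hd : 0 < d) (z : EuclideanSpace 𝕜 (Fin d → Fin n)) :
    ∃ (r : ℕ) (v : Fin r → Fin d → EuclideanSpace 𝕜 (Fin n)), z = ∑ i, eTensor (v i) := by
  classical
  set p : Fin d := ⟨0, hd⟩
  set base : (Fin d → Fin n) → Fin d → EuclideanSpace 𝕜 (Fin n) :=
    fun j i => EuclideanSpace.single (j i) (1:𝕜) with hbase
  set w : (Fin d → Fin n) → Fin d → EuclideanSpace 𝕜 (Fin n) :=
    fun j => Function.update (base j) p (z j • base j p) with hw
  have hbase_apply : ∀ j k, eTensor (base j) k = if k = j then (1:𝕜) else 0 := by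
    intro j k
    rw [eTensor_apply]
    calc (∏ i, base j i (k i)) = ∏ i, if k i = j i then (1:𝕜) else 0 := by
          apply Finset.prod_congr rfl
          intro i _
          rw [hbase]
          exact EuclideanSpace.single_apply (j i) 1 (k i)
      _ = if k = j then (1:𝕜) else 0 := by
          by_cases h : k = j
          · subst h; simp
          · rw [if_neg h]
            obtain ⟨i, hi⟩ := Function.ne_iff.mp h
            exact Finset.prod_eq_zero (Finset.mem_univ i) (if_neg hi)
  have hwj : ∀ j, eTensor (w j) = z j • eTensor (base j) := fun j => eTensor_smul_self _ _ _
  have hzrep : z = ∑ j : Fin d → Fin n, eTensor (w j) := by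
    ext k
    have : (∑ j : Fin d → Fin n, eTensor (w j)) k = ∑ j : Fin d → Fin n, eTensor (w j) k := by
      rw [WithLp.ofLp_sum, Finset.sum_apply]
    rw [this]
    calc z k = ∑ j : Fin d → Fin n, if k = j then z j else 0 := by
          rw [Finset.sum_ite_eq Finset.univ k z]; simp
      _ = ∑ j : Fin d → Fin n, eTensor (w j) k := by
          apply Finset.sum_congr rfl
          intro j _
          rw [hwj j]
          show _ = z j * eTensor (base j) k
          rw [hbase_apply]
          split <;> simp
  let e := Fintype.equivFin (Fin d → Fin n)
  refine ⟨Fintype.card (Fin d → Fin n), fun i => w (e.symm i), ?_⟩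
  rw [hzrep, ← Equiv.sum_comp e.symm (fun j => eTensor (w j))]

private lemma repCosts_nonempty (hd : 0 < d) (z : EuclideanSpace 𝕜 (Fin d → Fin n)) :
    (repCosts z).Nonempty := by
  obtain ⟨r, w, hw⟩ := canonRep hd z
  exact ⟨_, r, w, hw, rfl⟩

private lemma coord_le_pn (hd : 0 < d) (z : EuclideanSpace 𝕜 (Fin d → Fin n))
    (k : Fin d → Fin n) : ‖z k‖ ≤ projNorm z := by
  rw [projNorm_eq]
  apply le_csInf (repCosts_nonempty hd z)
  rintro c ⟨r, w, hw, rfl⟩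
  have hzk : z k = ∑ i, eTensor (w i) k := by
    rw [hw, WithLp.ofLp_sum, Finset.sum_apply]
  rw [hzk]
  calc ‖∑ i, eTensor (w i) k‖ ≤ ∑ i, ‖eTensor (w i) k‖ := norm_sum_le _ _
    _ ≤ ∑ i, ∏ j, ‖w i j‖ := by
        apply Finset.sum_le_sum
        intro i _
        rw [eTensor_apply]
        calc ‖∏ j, w i j (k j)‖ = ∏ j, ‖w i j (k j)‖ := norm_prod _ _
          _ ≤ ∏ j, ‖w i j‖ := Finset.prod_le_prod (fun j _ => norm_nonneg _)
              (fun j _ => coord_norm_le _ _)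

private lemma pn_eq_zero (hd : 0 < d) {z : EuclideanSpace 𝕜 (Fin d → Fin n)}
    (h : projNorm z = 0) : z = 0 := by
  ext k
  have := coord_le_pn hd z k
  rw [h] at this
  have : ‖z k‖ = 0 := le_antisymm this (norm_nonneg _)
  simpa using this

private lemma pn_add_le (hd : 0 < d) (a b : EuclideanSpace 𝕜 (Fin d → Fin n)) :
    projNorm (a + b) ≤ projNorm a + projNorm b := by
  refine le_of_forall_pos_le_add fun ε hε => ?_
  obtain ⟨ca, hca, hlta⟩ := Real.lt_sInf_add_pos (repCosts_nonempty hd a) (half_pos hε)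
  obtain ⟨cb, hcb, hltb⟩ := Real.lt_sInf_add_pos (repCosts_nonempty hd b) (half_pos hε)
  obtain ⟨ra, va, hva, hcav⟩ := hca
  obtain ⟨rb, vb, hvb, hcbv⟩ := hcb
  have hmem : ca + cb ∈ repCosts (a + b) := by
    refine ⟨ra + rb, Fin.append va vb, ?_, ?_⟩
    · rw [Fin.sum_univ_add]
      simp only [Fin.append_left, Fin.append_right]
      rw [hva, hvb]
    · rw [Fin.sum_univ_add]
      simp only [Fin.append_left, Fin.append_right]
      rw [hcav, hcbv]
  calc projNorm (a + b) ≤ ca + cb := pn_le hmem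
    _ ≤ (sInf (repCosts a) + ε / 2) + (sInf (repCosts b) + ε / 2) :=
        add_le_add hlta.le hltb.le
    _ = projNorm a + projNorm b + ε := by rw [projNorm_eq, projNorm_eq]; ring

private lemma pn_smul_le (hd : 0 < d) (c : 𝕜) (z : EuclideanSpace 𝕜 (Fin d → Fin n)) :
    projNorm (c • z) ≤ ‖c‖ * projNorm z := by
  classical
  set p : Fin d := ⟨0, hd⟩
  rcases eq_or_ne c 0 with rfl | hc
  · rw [zero_smul, projNorm_zero, norm_zero, zero_mul]
  · rw [← div_le_iff₀' (norm_pos_iff.mpr hc), projNorm_eq z]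
    apply le_csInf (repCosts_nonempty hd z)
    rintro cz ⟨r, w, hw, rfl⟩
    rw [div_le_iff₀' (norm_pos_iff.mpr hc)]
    have hmem : ‖c‖ * ∑ i, ∏ j, ‖w i j‖ ∈ repCosts (c • z) := by
      refine ⟨r, fun i => Function.update (w i) p (c • w i p), ?_, ?_⟩
      · rw [hw, Finset.smul_sum]
        apply Finset.sum_congr rfl
        intro i _
        rw [eTensor_smul_self]
      · rw [Finset.mul_sum]
        apply Finset.sum_congr rfl
        intro i _
        rw [prod_norm_update, norm_smul, mul_assoc]
        congr 1
        rw [Finset.sdiff_singleton_eq_erase]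
        exact (Finset.mul_prod_erase Finset.univ (fun j => ‖w i j‖) (Finset.mem_univ p)).symm
    exact pn_le hmem

end PN
section NormSyn
set_option linter.unusedSectionVars false

variable {𝕜 : Type*} [RCLike 𝕜] {d n : ℕ}

private lemma pn_neg (hd : 0 < d) (z : EuclideanSpace 𝕜 (Fin d → Fin n)) :
    projNorm (-z) = projNorm z := by
  have h : ∀ w : EuclideanSpace 𝕜 (Fin d → Fin n), projNorm (-w) ≤ projNorm w := by
    intro w
    have := pn_smul_le hd (-1 : 𝕜) w
    simpa using this
  refine le_antisymm (h z) ?_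
  have := h (-z)
  rwa [neg_neg] at this

private lemma pn_eTensor_le (x : Fin d → EuclideanSpace 𝕜 (Fin n)) :
    projNorm (eTensor x) ≤ ∏ i, ‖x i‖ := by
  apply pn_le
  exact ⟨1, fun _ => x, by simp, by simp⟩

/-- Type synonym carrying the projective norm. -/
private def PTen (𝕜 : Type*) [RCLike 𝕜] (d n : ℕ) : Type _ :=
  EuclideanSpace 𝕜 (Fin d → Fin n)

private instance : AddCommGroup (PTen 𝕜 d n) :=
  inferInstanceAs (AddCommGroup (EuclideanSpace 𝕜 (Fin d → Fin n)))

private instance : Module 𝕜 (PTen 𝕜 d n) :=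
  inferInstanceAs (Module 𝕜 (EuclideanSpace 𝕜 (Fin d → Fin n)))

private noncomputable instance [NeZero d] : NormedAddCommGroup (PTen 𝕜 d n) :=
  AddGroupNorm.toNormedAddCommGroup
    { toFun := fun z => projNorm (show EuclideanSpace 𝕜 (Fin d → Fin n) from z)
      map_zero' := projNorm_zero
      add_le' := fun a b => pn_add_le (Nat.pos_of_ne_zero (NeZero.ne d)) a b
      neg' := fun a => pn_neg (Nat.pos_of_ne_zero (NeZero.ne d)) a
      eq_zero_of_map_eq_zero' := fun a ha =>
        pn_eq_zero (Nat.pos_of_ne_zero (NeZero.ne d)) ha }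

private lemma PTen_norm [NeZero d] (z : PTen 𝕜 d n) :
    ‖z‖ = projNorm (show EuclideanSpace 𝕜 (Fin d → Fin n) from z) := rfl

private noncomputable instance [NeZero d] : NormedSpace 𝕜 (PTen 𝕜 d n) :=
  ⟨fun c x => pn_smul_le (Nat.pos_of_ne_zero (NeZero.ne d)) c x⟩

end NormSyn
section ML
set_option linter.unusedSectionVars false

variable {𝕜 : Type*} [RCLike 𝕜] {d n : ℕ}

private lemma basis_expand (x : EuclideanSpace 𝕜 (Fin n)) :
    x = ∑ k : Fin n, x k • EuclideanSpace.single k (1:𝕜) := by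
  ext t
  have h : (∑ k : Fin n, x k • EuclideanSpace.single k (1:𝕜)) t
      = ∑ k : Fin n, x k • EuclideanSpace.single k (1:𝕜) t := by
    rw [WithLp.ofLp_sum, Finset.sum_apply]; rfl
  rw [h]
  simp only [EuclideanSpace.single_apply, smul_eq_mul, mul_ite, mul_one, mul_zero]
  rw [Finset.sum_ite_eq Finset.univ t x]
  simp

private lemma ml_expand (L : MultilinearMap 𝕜 (fun _ : Fin d => EuclideanSpace 𝕜 (Fin n)) 𝕜)
    (x : Fin d → EuclideanSpace 𝕜 (Fin n)) :
    L x = ∑ j : Fin d → Fin n,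
      eTensor x j * L (fun i => EuclideanSpace.single (j i) (1:𝕜)) := by
  classical
  have hx : x = fun i => ∑ k : Fin n, x i k • EuclideanSpace.single k (1:𝕜) := by
    funext i; exact basis_expand (x i)
  calc L x = L (fun i => ∑ k : Fin n, x i k • EuclideanSpace.single k (1:𝕜)) := by rw [← hx]
    _ = ∑ j : Fin d → Fin n, L (fun i => x i (j i) • EuclideanSpace.single (j i) (1:𝕜)) :=
        L.map_sum (fun i k => x i k • EuclideanSpace.single k (1:𝕜))
    _ = ∑ j : Fin d → Fin n,
          eTensor x j * L (fun i => EuclideanSpace.single (j i) (1:𝕜)) := by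
        apply Finset.sum_congr rfl
        intro j _
        rw [L.map_smul_univ (fun i => x i (j i)) (fun i => EuclideanSpace.single (j i) (1:𝕜))]
        rw [eTensor_apply, smul_eq_mul]

private lemma ml_sum_rep (L : MultilinearMap 𝕜 (fun _ : Fin d => EuclideanSpace 𝕜 (Fin n)) 𝕜)
    (r : ℕ) (w : Fin r → Fin d → EuclideanSpace 𝕜 (Fin n)) :
    ∑ i, L (w i) = ∑ j : Fin d → Fin n,
      (∑ i, eTensor (w i) j) * L (fun i0 => EuclideanSpace.single (j i0) (1:𝕜)) := by
  calc ∑ i, L (w i)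
      = ∑ i, ∑ j : Fin d → Fin n,
          eTensor (w i) j * L (fun i0 => EuclideanSpace.single (j i0) (1:𝕜)) :=
        Finset.sum_congr rfl fun i _ => ml_expand L (w i)
    _ = ∑ j : Fin d → Fin n, ∑ i,
          eTensor (w i) j * L (fun i0 => EuclideanSpace.single (j i0) (1:𝕜)) :=
        Finset.sum_comm
    _ = ∑ j : Fin d → Fin n,
          (∑ i, eTensor (w i) j) * L (fun i0 => EuclideanSpace.single (j i0) (1:𝕜)) := by
        apply Finset.sum_congr rfl
        intro j _
        rw [Finset.sum_mul]

private lemma eq_ofReal_of_norm_le {t : 𝕜} {a : ℝ} (h1 : ‖t‖ ≤ a) (h2 : RCLike.re t = a) :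
    t = (a : 𝕜) := by
  have h3 : ‖t‖ ≤ RCLike.re t := h2 ▸ h1
  have h4 := RCLike.re_eq_self_of_le h3
  rw [← h4, h2]

end ML
section Coord
set_option linter.unusedSectionVars false

variable {𝕜 : Type*} [RCLike 𝕜] {d n : ℕ}

private lemma sup_eq_one {L : MultilinearMap 𝕜 (fun _ : Fin d => EuclideanSpace 𝕜 (Fin n)) 𝕜}
    (hbd : ∀ y : Fin d → EuclideanSpace 𝕜 (Fin n), ‖L y‖ ≤ ∏ i, ‖y i‖)
    (hex : ∃ y : Fin d → EuclideanSpace 𝕜 (Fin n), (∀ i, ‖y i‖ = 1) ∧ ‖L y‖ = 1) :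
    sSup {c : ℝ | ∃ y : Fin d → EuclideanSpace 𝕜 (Fin n),
      (∀ i, ‖y i‖ = 1) ∧ c = ‖L y‖} = 1 := by
  obtain ⟨y₀, hy₀, hLy₀⟩ := hex
  have hub : ∀ c ∈ {c : ℝ | ∃ y : Fin d → EuclideanSpace 𝕜 (Fin n),
      (∀ i, ‖y i‖ = 1) ∧ c = ‖L y‖}, c ≤ 1 := by
    rintro c ⟨y, hy, rfl⟩
    calc ‖L y‖ ≤ ∏ i, ‖y i‖ := hbd y
      _ = 1 := by rw [Finset.prod_congr rfl fun i _ => hy i, Finset.prod_const_one]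
  have hmem : (1:ℝ) ∈ {c : ℝ | ∃ y : Fin d → EuclideanSpace 𝕜 (Fin n),
      (∀ i, ‖y i‖ = 1) ∧ c = ‖L y‖} := ⟨y₀, hy₀, hLy₀.symm⟩
  exact le_antisymm (csSup_le ⟨1, hmem⟩ hub) (le_csSup ⟨1, hub⟩ hmem)

private def coordLM (p₀ : Fin n) : EuclideanSpace 𝕜 (Fin n) →ₗ[𝕜] 𝕜 where
  toFun x := x p₀
  map_add' _ _ := rfl
  map_smul' _ _ := rfl

private noncomputable def coordML (p₀ : Fin n) :
    MultilinearMap 𝕜 (fun _ : Fin d => EuclideanSpace 𝕜 (Fin n)) 𝕜 :=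
  (MultilinearMap.mkPiAlgebra 𝕜 (Fin d) 𝕜).compLinearMap (fun _ => coordLM p₀)

private lemma coordML_apply (p₀ : Fin n) (y : Fin d → EuclideanSpace 𝕜 (Fin n)) :
    coordML p₀ y = ∏ i, y i p₀ := by
  rw [coordML, MultilinearMap.compLinearMap_apply, MultilinearMap.mkPiAlgebra_apply]
  rfl

private lemma coord_case (hn : 0 < n) (r : ℕ)
    (v : Fin r → Fin d → EuclideanSpace 𝕜 (Fin n))
    (hzero : ∀ i, d = 0 ∨ ∃ j, v i j = 0) :
    ∃ L : MultilinearMap 𝕜 (fun _ : Fin d => EuclideanSpace 𝕜 (Fin n)) 𝕜,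
      (∀ (η : Equiv.Perm (Fin d)) (y : Fin d → EuclideanSpace 𝕜 (Fin n)),
        L (y ∘ η) = L y) ∧
      (∀ y : Fin d → EuclideanSpace 𝕜 (Fin n), ‖L y‖ ≤ ∏ i, ‖y i‖) ∧
      sSup {c : ℝ | ∃ y : Fin d → EuclideanSpace 𝕜 (Fin n),
        (∀ i, ‖y i‖ = 1) ∧ c = ‖L y‖} = 1 ∧
      (∀ i, L (v i) = ((∏ j, ‖v i j‖ : ℝ) : 𝕜)) := by
  set p₀ : Fin n := ⟨0, hn⟩
  refine ⟨coordML p₀, ?_, ?_, ?_, ?_⟩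
  · intro η y
    rw [coordML_apply, coordML_apply]
    exact Equiv.prod_comp η (fun i => y i p₀)
  · intro y
    rw [coordML_apply]
    calc ‖∏ i, y i p₀‖ = ∏ i, ‖y i p₀‖ := norm_prod _ _
      _ ≤ ∏ i, ‖y i‖ := Finset.prod_le_prod (fun i _ => norm_nonneg _)
          (fun i _ => coord_norm_le _ _)
  · apply sup_eq_one
    · intro y
      rw [coordML_apply]
      calc ‖∏ i, y i p₀‖ = ∏ i, ‖y i p₀‖ := norm_prod _ _
        _ ≤ ∏ i, ‖y i‖ := Finset.prod_le_prod (fun i _ => norm_nonneg _)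
            (fun i _ => coord_norm_le _ _)
    · refine ⟨fun _ => EuclideanSpace.single p₀ (1:𝕜), fun i => ?_, ?_⟩
      · rw [EuclideanSpace.norm_single]; simp
      · rw [coordML_apply]
        have h1 : ∀ i : Fin d, (EuclideanSpace.single p₀ (1:𝕜)) p₀ = 1 := by
          intro i
          rw [EuclideanSpace.single_apply, if_pos rfl]
        simp [EuclideanSpace.single_apply]
  · intro i
    rcases hzero i with hd0 | ⟨j₀, hj₀⟩
    · subst hd0
      rw [coordML_apply]
      simp
    · rw [coordML_apply]
      have h1 : (∏ j, v i j p₀) = 0 :=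
        Finset.prod_eq_zero (Finset.mem_univ j₀) (by rw [hj₀]; rfl)
      have h2 : (∏ j, ‖v i j‖) = 0 :=
        Finset.prod_eq_zero (Finset.mem_univ j₀) (by rw [hj₀, norm_zero])
      rw [h1, h2]
      simp

private lemma backward_dir (r : ℕ) (v : Fin r → Fin d → EuclideanSpace 𝕜 (Fin n))
    {z : EuclideanSpace 𝕜 (Fin d → Fin n)} (hrep : z = ∑ i, eTensor (v i))
    (L : MultilinearMap 𝕜 (fun _ : Fin d => EuclideanSpace 𝕜 (Fin n)) 𝕜)
    (hbd : ∀ y : Fin d → EuclideanSpace 𝕜 (Fin n), ‖L y‖ ≤ ∏ i, ‖y i‖)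
    (hval : ∀ i, L (v i) = ((∏ j, ‖v i j‖ : ℝ) : 𝕜)) :
    projNorm z = ∑ i, ∏ j, ‖v i j‖ := by
  refine le_antisymm (pn_le ⟨r, v, hrep, rfl⟩) ?_
  rw [projNorm_eq]
  apply le_csInf ⟨∑ i, ∏ j, ‖v i j‖, mem_repCosts r v hrep⟩
  rintro c ⟨r', w, hw, rfl⟩
  have hpt : ∀ j : Fin d → Fin n, (∑ i, eTensor (v i) j) = ∑ i, eTensor (w i) j := by
    intro j
    have h1 : (∑ i, eTensor (v i)) j = ∑ i, eTensor (v i) j := by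
      rw [WithLp.ofLp_sum, Finset.sum_apply]
    have h2 : (∑ i, eTensor (w i)) j = ∑ i, eTensor (w i) j := by
      rw [WithLp.ofLp_sum, Finset.sum_apply]
    rw [← h1, ← h2, ← hrep, ← hw]
  have h1 : (∑ i, L (v i)) = ∑ i, L (w i) := by
    rw [ml_sum_rep L r v, ml_sum_rep L r' w]
    apply Finset.sum_congr rfl
    intro j _
    rw [hpt j]
  have h2 : ((∑ i, ∏ j, ‖v i j‖ : ℝ) : 𝕜) = ∑ i, L (v i) := by
    rw [RCLike.ofReal_sum]
    exact Finset.sum_congr rfl fun i _ => (hval i).symm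
  have h3 : (∑ i, ∏ j, ‖v i j‖) = ‖((∑ i, ∏ j, ‖v i j‖ : ℝ) : 𝕜)‖ := by
    rw [RCLike.norm_ofReal, abs_of_nonneg]
    exact Finset.sum_nonneg fun i _ => Finset.prod_nonneg fun j _ => norm_nonneg _
  rw [h3, h2, h1]
  calc ‖∑ i, L (w i)‖ ≤ ∑ i, ‖L (w i)‖ := norm_sum_le _ _
    _ ≤ ∑ i, ∏ j, ‖w i j‖ := Finset.sum_le_sum fun i _ => hbd (w i)

end Coord
/-- Let `z ∈ ⊗^d 𝕂ⁿ` be symmetric with representation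
`z = Σ_{i=1}^r z₁ⁱ ⊗ ⋯ ⊗ z_dⁱ`.  Then `π(z) = Σᵢ ‖z₁ⁱ‖⋯‖z_dⁱ‖` holds iff there is a symmetric
`d`-linear form `L` on `𝕂ⁿ` of norm one with `L(z₁ⁱ,…,z_dⁱ) = ‖z₁ⁱ‖⋯‖z_dⁱ‖` for all `i`. -/
theorem projNorm_attained_iff_symmetric_form
    {𝕜 : Type*} [RCLike 𝕜] {d n : ℕ} (hn : 0 < n)
    (z : EuclideanSpace 𝕜 (Fin d → Fin n)) (hz : IsSymTensor z)
    (r : ℕ) (v : Fin r → Fin d → EuclideanSpace 𝕜 (Fin n))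
    (hrep : z = ∑ i, eTensor (v i)) :
    projNorm z = ∑ i, ∏ j, ‖v i j‖ ↔
      ∃ L : MultilinearMap 𝕜 (fun _ : Fin d => EuclideanSpace 𝕜 (Fin n)) 𝕜,
        (∀ (η : Equiv.Perm (Fin d)) (y : Fin d → EuclideanSpace 𝕜 (Fin n)),
          L (y ∘ η) = L y) ∧
        (∀ y : Fin d → EuclideanSpace 𝕜 (Fin n), ‖L y‖ ≤ ∏ i, ‖y i‖) ∧
        sSup {c : ℝ | ∃ y : Fin d → EuclideanSpace 𝕜 (Fin n),
          (∀ i, ‖y i‖ = 1) ∧ c = ‖L y‖} = 1 ∧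
        (∀ i, L (v i) = ((∏ j, ‖v i j‖ : ℝ) : 𝕜)) := by
  classical
  constructor
  · -- forward direction
    intro heq
    have hsum_nonneg : (0:ℝ) ≤ ∑ i, ∏ j, ‖v i j‖ :=
      Finset.sum_nonneg fun i _ => Finset.prod_nonneg fun j _ => norm_nonneg _
    rcases eq_or_lt_of_le hsum_nonneg with hzero | hpos
    · -- total cost is zero
      apply coord_case hn r v
      intro i
      right
      have hall : ∏ j, ‖v i j‖ = 0 :=
        (Finset.sum_eq_zero_iff_of_nonneg
          (fun i _ => Finset.prod_nonneg fun j _ => norm_nonneg _)).mp hzero.symm i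
          (Finset.mem_univ i)
      obtain ⟨j₀, -, hj₀⟩ := Finset.prod_eq_zero_iff.mp hall
      exact ⟨j₀, norm_eq_zero.mp hj₀⟩
    rcases Nat.eq_zero_or_pos d with hd0 | hd
    · exact coord_case hn r v fun i => Or.inl hd0
    -- main case : d > 0 and positive cost
    haveI : NeZero d := ⟨hd.ne'⟩
    have hpnpos : 0 < projNorm z := by rw [heq]; exact hpos
    have hzne : z ≠ 0 := by
      intro h
      rw [h, projNorm_zero] at hpnpos
      exact lt_irrefl _ hpnpos
    obtain ⟨g, hg1, hg2⟩ :=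
      exists_dual_vector 𝕜 (show PTen 𝕜 d n from z) (by exact (show projNorm z ≠ 0 from hpnpos.ne'))
    have hgle : ∀ t : EuclideanSpace 𝕜 (Fin d → Fin n), ‖g t‖ ≤ projNorm t := by
      intro t
      calc ‖g t‖ ≤ ‖g‖ * ‖show PTen 𝕜 d n from t‖ := g.le_opNorm t
        _ = projNorm t := by rw [hg1, one_mul, PTen_norm]
    have hgz : g z = ((∑ i, ∏ j, ‖v i j‖ : ℝ) : 𝕜) := by
      have hzn : ‖(show PTen 𝕜 d n from z)‖ = (∑ i, ∏ j, ‖v i j‖) := by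
        rw [PTen_norm]; exact heq
      rw [hg2, hzn]
    set L₀ : MultilinearMap 𝕜 (fun _ : Fin d => EuclideanSpace 𝕜 (Fin n)) 𝕜 :=
      { toFun := fun x => g (eTensor x)
        map_update_add' := by
          intro inst m i a b
          exact (congrArg g (eTensor_update_add m i a b)).trans (map_add g _ _)
        map_update_smul' := by
          intro inst m i c a
          exact (congrArg g (eTensor_update_smul m i c a)).trans (map_smul g _ _) } with hL₀
    have hL₀apply : ∀ x, L₀ x = g (eTensor x) := fun x => rfl
    have hL₀le : ∀ x : Fin d → EuclideanSpace 𝕜 (Fin n), ‖L₀ x‖ ≤ ∏ i, ‖x i‖ := by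
      intro x
      rw [hL₀apply]
      exact (hgle (eTensor x)).trans (pn_eTensor_le x)
    have hperm : ∀ (η : Equiv.Perm (Fin d)) (x : Fin d → EuclideanSpace 𝕜 (Fin n)),
        eTensor (x ∘ η) = permLin 𝕜 d n η⁻¹ (eTensor x) := by
      intro η x
      ext j
      show (∏ i, x (η i) (j i)) = eTensor x (j ∘ ⇑η⁻¹)
      rw [eTensor_apply]
      calc ∏ i, x (η i) (j i) = ∏ i, x (η i) ((j ∘ ⇑η⁻¹) (η i)) := by
            apply Finset.prod_congr rfl
            intro i _
            have h5 : (j ∘ ⇑η⁻¹) (η i) = j i := by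
              simp
            rw [h5]
        _ = ∏ i, x i ((j ∘ ⇑η⁻¹) i) := Equiv.prod_comp η (fun i => x i ((j ∘ ⇑η⁻¹) i))
    have hsumT : ∀ η : Equiv.Perm (Fin d), ∑ i, eTensor (v i ∘ η) = z := by
      intro η
      calc ∑ i, eTensor (v i ∘ η) = ∑ i, permLin 𝕜 d n η⁻¹ (eTensor (v i)) :=
            Finset.sum_congr rfl fun i _ => hperm η (v i)
        _ = permLin 𝕜 d n η⁻¹ (∑ i, eTensor (v i)) := (map_sum _ _ _).symm
        _ = z := by rw [← hrep]; exact hz η⁻¹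
    have hkey : ∀ (η : Equiv.Perm (Fin d)) (i : Fin r),
        L₀ (v i ∘ η) = ((∏ j, ‖v i j‖ : ℝ) : 𝕜) := by
      intro η
      have hsum : ∑ i, L₀ (v i ∘ η) = ((∑ i, ∏ j, ‖v i j‖ : ℝ) : 𝕜) := by
        calc ∑ i, L₀ (v i ∘ η) = ∑ i, g (eTensor (v i ∘ η)) := rfl
          _ = g (∑ i, eTensor (v i ∘ η)) := (map_sum g _ _).symm
          _ = ((∑ i, ∏ j, ‖v i j‖ : ℝ) : 𝕜) := by exact (congrArg g (hsumT η)).trans hgz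
      have hb : ∀ i, ‖L₀ (v i ∘ η)‖ ≤ ∏ j, ‖v i j‖ := by
        intro i
        have h1 := hL₀le (v i ∘ η)
        have h2 : (∏ j, ‖(v i ∘ η) j‖) = ∏ j, ‖v i j‖ :=
          Equiv.prod_comp η (fun j => ‖v i j‖)
        rwa [h2] at h1
      have hre : ∀ i ∈ Finset.univ, RCLike.re (L₀ (v i ∘ η)) = ∏ j, ‖v i j‖ := by
        apply (Finset.sum_eq_sum_iff_of_le
          (fun i _ => (RCLike.re_le_norm _).trans (hb i))).mp
        have h3 := congrArg RCLike.re hsum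
        rwa [map_sum, RCLike.ofReal_re] at h3
      intro i
      exact eq_ofReal_of_norm_le (hb i) (hre i (Finset.mem_univ i))
    have hfactK : (d.factorial : 𝕜) ≠ 0 := Nat.cast_ne_zero.mpr d.factorial_ne_zero
    have hfactR : (d.factorial : ℝ) ≠ 0 := Nat.cast_ne_zero.mpr d.factorial_ne_zero
    set L : MultilinearMap 𝕜 (fun _ : Fin d => EuclideanSpace 𝕜 (Fin n)) 𝕜 :=
      ((d.factorial : 𝕜)⁻¹) • ∑ η : Equiv.Perm (Fin d), L₀.domDomCongr η with hL
    have hLapply : ∀ y : Fin d → EuclideanSpace 𝕜 (Fin n),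
        L y = (d.factorial : 𝕜)⁻¹ * ∑ η : Equiv.Perm (Fin d), L₀ (y ∘ η) := by
      intro y
      calc L y = (d.factorial : 𝕜)⁻¹ • (∑ η : Equiv.Perm (Fin d), L₀.domDomCongr η) y := rfl
        _ = (d.factorial : 𝕜)⁻¹ * ∑ η : Equiv.Perm (Fin d), (L₀.domDomCongr η) y := by
            rw [MultilinearMap.sum_apply, smul_eq_mul]
        _ = (d.factorial : 𝕜)⁻¹ * ∑ η : Equiv.Perm (Fin d), L₀ (y ∘ η) := rfl
    have hLv : ∀ i, L (v i) = ((∏ j, ‖v i j‖ : ℝ) : 𝕜) := by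
      intro i
      rw [hLapply, Finset.sum_congr rfl (fun η _ => hkey η i), Finset.sum_const,
        Finset.card_univ, Fintype.card_perm, Fintype.card_fin, nsmul_eq_mul,
        ← mul_assoc, inv_mul_cancel₀ hfactK, one_mul]
    have hsym : ∀ (η₀ : Equiv.Perm (Fin d)) (y : Fin d → EuclideanSpace 𝕜 (Fin n)),
        L (y ∘ η₀) = L y := by
      intro η₀ y
      rw [hLapply, hLapply]
      congr 1
      calc ∑ η : Equiv.Perm (Fin d), L₀ ((y ∘ η₀) ∘ η)
          = ∑ η : Equiv.Perm (Fin d), L₀ (y ∘ (Equiv.mulLeft η₀ η)) := by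
            apply Finset.sum_congr rfl
            intro η _
            congr 1
        _ = ∑ η : Equiv.Perm (Fin d), L₀ (y ∘ η) :=
            Equiv.sum_comp (Equiv.mulLeft η₀) (fun η => L₀ (y ∘ η))
    have hbound : ∀ y : Fin d → EuclideanSpace 𝕜 (Fin n), ‖L y‖ ≤ ∏ i, ‖y i‖ := by
      intro y
      rw [hLapply]
      calc ‖(d.factorial:𝕜)⁻¹ * ∑ η : Equiv.Perm (Fin d), L₀ (y ∘ η)‖
          = (d.factorial:ℝ)⁻¹ * ‖∑ η : Equiv.Perm (Fin d), L₀ (y ∘ η)‖ := by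
            rw [norm_mul, norm_inv, RCLike.norm_natCast]
        _ ≤ (d.factorial:ℝ)⁻¹ * ∑ η : Equiv.Perm (Fin d), ‖L₀ (y ∘ η)‖ := by
            apply mul_le_mul_of_nonneg_left (norm_sum_le _ _)
            positivity
        _ ≤ (d.factorial:ℝ)⁻¹ * ∑ _η : Equiv.Perm (Fin d), ∏ i, ‖y i‖ := by
            apply mul_le_mul_of_nonneg_left _ (by positivity)
            apply Finset.sum_le_sum
            intro η _
            have h2 : (∏ j, ‖(y ∘ η) j‖) = ∏ j, ‖y j‖ :=
              Equiv.prod_comp η (fun j => ‖y j‖)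
            exact h2 ▸ hL₀le (y ∘ η)
        _ = ∏ i, ‖y i‖ := by
            rw [Finset.sum_const, Finset.card_univ, Fintype.card_perm, Fintype.card_fin,
              nsmul_eq_mul, ← mul_assoc, inv_mul_cancel₀ hfactR, one_mul]
    refine ⟨L, hsym, hbound, ?_, hLv⟩
    apply sup_eq_one hbound
    obtain ⟨i₀, -, hi₀⟩ := Finset.exists_ne_zero_of_sum_ne_zero hpos.ne'
    have hjne : ∀ j, ‖v i₀ j‖ ≠ 0 := by
      intro j h
      exact hi₀ (Finset.prod_eq_zero (Finset.mem_univ j) h)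
    have hprodne : (∏ j, ‖v i₀ j‖) ≠ 0 := hi₀
    refine ⟨fun j => ((‖v i₀ j‖⁻¹ : ℝ) : 𝕜) • v i₀ j, ?_, ?_⟩
    · intro j
      rw [norm_smul, RCLike.norm_ofReal, abs_of_nonneg (by positivity),
        inv_mul_cancel₀ (hjne j)]
    · have hLy : L (fun j => ((‖v i₀ j‖⁻¹ : ℝ) : 𝕜) • v i₀ j) = 1 := by
        rw [L.map_smul_univ (fun j => ((‖v i₀ j‖⁻¹ : ℝ) : 𝕜)) (v i₀), hLv i₀]
        rw [smul_eq_mul, ← RCLike.ofReal_prod, ← RCLike.ofReal_mul,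
          Finset.prod_inv_distrib, inv_mul_cancel₀ hprodne, RCLike.ofReal_one]
      rw [hLy, norm_one]
  · -- backward direction
    rintro ⟨L, -, hbd, -, hval⟩
    exact backward_dir r v hrep L hbd hval
end
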